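/- arXiv:1101.4178 — 7 statements merged into one kernel-verified Lean document; each statement's English description precedes it below -/
import Mathlib

section
/- Let {Λ_i}_{i∈ℕ} be a countable system of closed cones in ℝⁿ that is extremal at the origin (there exists a bounded sequence {a_i} ⊂ ℝⁿ with ⋂_{i=1}^∞ (Λ_i − a_i) = ∅) and satisfies the nonoverlapping condition ⋂_{i=1}^∞ Λ_i = {0}. Then there exist points w_i ∈ Λ_i and vectors x*_i ∈ N̂(w_i; Λ_i) ⊆ N(0; Λ_i) for i ∈ ℕ such that Σ_{i=1}^∞ 2^{-i} x*_i = 0 and Σ_{i=1}^∞ 2^{-i} ‖x*_i‖² = 1. -/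
open Filter Topology

variable {E : Type*} [NormedAddCommGroup E] [InnerProductSpace ℝ E]

/-- `Λ` is a cone: closed under multiplication by nonnegative scalars. -/
def IsConeSet (Λ : Set E) : Prop := ∀ t : ℝ, 0 ≤ t → ∀ v ∈ Λ, t • v ∈ Λ

/-- The translate `S - a = {x | x + a ∈ S}`. -/
def Set.translate (S : Set E) (a : E) : Set E := {x | x + a ∈ S}

/-- `v` is a Fréchet `ε`-normal to `Ω` at `x₀` (normals identified with vectors
via the inner ℝ product). -/
def IsEpsNormal (ε : ℝ) (v : E) (Ω : Set E) (x₀ : E) : Prop :=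
  ∀ η > 0, ∃ δ > 0, ∀ x ∈ Ω, ‖x - x₀‖ < δ → (inner ℝ v (x - x₀) : ℝ) ≤ (ε + η) * ‖x - x₀‖

/-- The Fréchet (regular) normal cone to `Ω` at `x₀`. -/
def frechetNormalCone (Ω : Set E) (x₀ : E) : Set E := {v | IsEpsNormal 0 v Ω x₀}

/-- The Mordukhovich limiting normal cone to `Ω` at `x₀`: limits of Fréchet
`ε_k`-normals at points `x_k → x₀` of `Ω` with `ε_k ↓ 0`. -/
def limitingNormalCone (Ω : Set E) (x₀ : E) : Set E :=
  {v | ∃ (ε : ℕ → ℝ) (x : ℕ → E) (w : ℕ → E),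
    (∀ k, 0 ≤ ε k) ∧ Tendsto ε atTop (𝓝 0) ∧
    (∀ k, x k ∈ Ω) ∧ Tendsto x atTop (𝓝 x₀) ∧
    Tendsto w atTop (𝓝 v) ∧ (∀ k, IsEpsNormal (ε k) (w k) Ω (x k))}

/-- A nearest point gives a Fréchet normal. -/
lemma frechet_of_nearest {Λ : Set E} {z p : E} (hmin : ∀ s ∈ Λ, dist z p ≤ dist z s) :
    z - p ∈ frechetNormalCone Λ p := by
  intro η hη
  refine ⟨2 * η, by positivity, fun x hx hxd => ?_⟩
  have key : (inner ℝ (z - p) (x - p) : ℝ) ≤ ‖x - p‖ ^ 2 / 2 := by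
    have h1 : ‖z - p‖ ≤ ‖z - x‖ := by
      simpa [dist_eq_norm] using hmin x hx
    have h2 : ‖z - x‖ ^ 2 = ‖z - p‖ ^ 2 - 2 * inner ℝ (z - p) (x - p) + ‖x - p‖ ^ 2 := by
      have : z - x = (z - p) - (x - p) := by abel
      rw [this, norm_sub_sq_real]
    nlinarith [sq_nonneg ‖z - p‖, pow_le_pow_left₀ (norm_nonneg _) h1 2]
  calc (inner ℝ (z - p) (x - p) : ℝ) ≤ ‖x - p‖ ^ 2 / 2 := key
    _ ≤ (0 + η) * ‖x - p‖ := by nlinarith [norm_nonneg (x - p)]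

/-- Positive scaling of Fréchet normals. -/
lemma frechet_smul {Λ : Set E} {p v : E} {t : ℝ} (ht : 0 < t)
    (hv : v ∈ frechetNormalCone Λ p) : t • v ∈ frechetNormalCone Λ p := by
  intro η hη
  obtain ⟨δ, hδ, h⟩ := hv (η / t) (by positivity)
  refine ⟨δ, hδ, fun x hx hxd => ?_⟩
  have := h x hx hxd
  rw [real_inner_smul_left]
  calc t * inner ℝ v (x - p) ≤ t * ((0 + η / t) * ‖x - p‖) := by
        apply mul_le_mul_of_nonneg_left this ht.le
    _ = (0 + η) * ‖x - p‖ := by field_simp; ring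

/-- In a cone, a Fréchet normal at `p` is also a Fréchet normal at `t • p`, `t > 0`. -/
lemma frechet_cone_scale {Λ : Set E} (hΛ : IsConeSet Λ) {p v : E} {t : ℝ} (ht : 0 < t)
    (hv : v ∈ frechetNormalCone Λ p) : v ∈ frechetNormalCone Λ (t • p) := by
  intro η hη
  obtain ⟨δ, hδ, h⟩ := hv η hη
  refine ⟨t * δ, by positivity, fun x hx hxd => ?_⟩
  have hy : t⁻¹ • x ∈ Λ := hΛ t⁻¹ (by positivity) x hx
  have hxy : x - t • p = t • (t⁻¹ • x - p) := by
    rw [smul_sub, smul_inv_smul₀ ht.ne']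
  have hnorm : ‖x - t • p‖ = t * ‖t⁻¹ • x - p‖ := by
    rw [hxy, norm_smul, Real.norm_eq_abs, abs_of_pos ht]
  have hd : ‖t⁻¹ • x - p‖ < δ := by
    rw [hnorm] at hxd
    exact lt_of_mul_lt_mul_left (by linarith) ht.le
  have := h _ hy hd
  rw [hxy, real_inner_smul_right, ← hxy, hnorm]
  calc t * inner ℝ v (t⁻¹ • x - p) ≤ t * ((0 + η) * ‖t⁻¹ • x - p‖) :=
        mul_le_mul_of_nonneg_left this ht.le
    _ = (0 + η) * (t * ‖t⁻¹ • x - p‖) := by ring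

/-- A Fréchet normal at any point of a cone is a limiting normal at the origin. -/
lemma limiting_of_frechet_cone {Λ : Set E} (hΛ : IsConeSet Λ) {p v : E} (hp : p ∈ Λ)
    (hv : v ∈ frechetNormalCone Λ p) : v ∈ limitingNormalCone Λ 0 := by
  refine ⟨fun _ => 0, fun k => ((k : ℝ) + 1)⁻¹ • p, fun _ => v, fun _ => le_refl 0,
    tendsto_const_nhds, fun k => hΛ _ (by positivity) p hp, ?_, tendsto_const_nhds, fun k => ?_⟩
  · have : Tendsto (fun k : ℕ => ((k : ℝ) + 1)⁻¹) atTop (𝓝 0) := tendsto_one_div_add_atTop_nhds_zero_nat.congr (by intro k; rw [one_div])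
    simpa using this.smul_const p
  · exact frechet_cone_scale hΛ (by positivity) hv

lemma le_infDist_of_forall {s : Set E} (hs : s.Nonempty) {x : E} {b : ℝ}
    (h : ∀ y ∈ s, b ≤ dist x y) : b ≤ Metric.infDist x s :=
  le_of_not_gt fun hlt => by
    obtain ⟨y, hy, hd⟩ := (Metric.infDist_lt_iff hs).1 hlt
    exact absurd (h y hy) (not_le.2 hd)

/-- Homogeneity lower bound for the distance to a cone. -/
lemma smul_infDist_le {Λ : Set E} (hΛ : IsConeSet Λ) (h0 : (0 : E) ∈ Λ) {t : ℝ} (ht : 0 ≤ t)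
    (u : E) : t * Metric.infDist u Λ ≤ Metric.infDist (t • u) Λ := by
  rcases ht.eq_or_lt with rfl | ht
  · simp [Metric.infDist_zero_of_mem h0]
  · refine le_infDist_of_forall ⟨0, h0⟩ fun q hq => ?_
    have hq' : t⁻¹ • q ∈ Λ := hΛ t⁻¹ (by positivity) q hq
    have : Metric.infDist u Λ ≤ dist u (t⁻¹ • q) := Metric.infDist_le_dist_of_mem hq'
    have hd : dist (t • u) q = t * dist u (t⁻¹ • q) := by
      rw [show q = t • (t⁻¹ • q) by rw [smul_inv_smul₀ ht.ne'], dist_smul₀,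
        smul_inv_smul₀ ht.ne', Real.norm_eq_abs, abs_of_pos ht]
    rw [hd]
    exact mul_le_mul_of_nonneg_left this ht.le

lemma mu_eq (i : ℕ) : (1 / 2 ^ (i + 1) : ℝ) = (1 / 2) * (1 / 2) ^ i := by
  rw [pow_succ, one_div_pow]; ring

lemma mu_hasSum : HasSum (fun i : ℕ => (1 / 2 ^ (i + 1) : ℝ)) 1 := by
  have := (hasSum_geometric_two).mul_left (1 / 2)
  norm_num at this
  exact this.congr_fun fun i => (mu_eq i).symm ▸ by ring

lemma mu_summable : Summable (fun i : ℕ => (1 / 2 ^ (i + 1) : ℝ)) := mu_hasSum.summable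

lemma mu_pos (i : ℕ) : (0 : ℝ) < 1 / 2 ^ (i + 1) := by positivity

lemma continuousOn_weighted_tsum {φ : ℕ → E → ℝ} (hφ : ∀ i, Continuous (φ i)) {s : Set E}
    {C : ℝ} (hb : ∀ i x, x ∈ s → |φ i x| ≤ C) :
    ContinuousOn (fun x => ∑' i, (1 / 2 ^ (i + 1) : ℝ) * φ i x ^ 2) s := by
  have hu : Summable (fun i : ℕ => (1 / 2 ^ (i + 1) : ℝ) * C ^ 2) := mu_summable.mul_right _
  have hbd : ∀ (i : ℕ) (x : E), x ∈ s →
      ‖(1 / 2 ^ (i + 1) : ℝ) * φ i x ^ 2‖ ≤ (1 / 2 ^ (i + 1) : ℝ) * C ^ 2 := by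
    intro i x hx
    rw [Real.norm_eq_abs, abs_mul, abs_of_pos (mu_pos i)]
    refine mul_le_mul_of_nonneg_left ?_ (mu_pos i).le
    rw [abs_pow]
    exact pow_le_pow_left₀ (abs_nonneg _) (hb i x hx) 2
  exact (tendstoUniformlyOn_tsum hu hbd).continuousOn
    (Filter.Eventually.of_forall fun t => (continuousOn_finset_sum t fun i _ =>
      (continuous_const.mul ((hφ i).pow 2)).continuousOn)).frequently

set_option maxHeartbeats 1000000

/-- conic extremal principle in finite dimensions. -/
theorem conic_extremal_principle (n : ℕ) (Λ : ℕ → Set (EuclideanSpace ℝ (Fin n)))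
    (hcone : ∀ i, IsConeSet (Λ i)) (hclosed : ∀ i, IsClosed (Λ i))
    (h0 : ∀ i, (0 : EuclideanSpace ℝ (Fin n)) ∈ Λ i)
    (hext : ∃ a : ℕ → EuclideanSpace ℝ (Fin n), (∃ M : ℝ, ∀ i, ‖a i‖ ≤ M) ∧
      ⋂ i, (Λ i).translate (a i) = ∅)
    (hnonover : ⋂ i, Λ i = {0}) :
    ∃ (w x : ℕ → EuclideanSpace ℝ (Fin n)),
      (∀ i, w i ∈ Λ i) ∧
      (∀ i, x i ∈ frechetNormalCone (Λ i) (w i)) ∧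
      (∀ i, x i ∈ limitingNormalCone (Λ i) 0) ∧
      HasSum (fun i => (1 / 2 ^ (i + 1) : ℝ) • x i) 0 ∧
      HasSum (fun i => (1 / 2 ^ (i + 1) : ℝ) * ‖x i‖ ^ 2) 1 := by
  classical
  obtain ⟨a, ⟨M, hM⟩, hempty⟩ := hext
  -- degenerate case: the space is trivial
  by_cases hnt : ∀ z : EuclideanSpace ℝ (Fin n), z = 0
  · exfalso
    have hmem : (0 : EuclideanSpace ℝ (Fin n)) ∈ ⋂ i, (Λ i).translate (a i) := by
      refine Set.mem_iInter.2 fun i => ?_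
      show (0 : EuclideanSpace ℝ (Fin n)) + a i ∈ Λ i
      rw [hnt (a i), add_zero]
      exact h0 i
    rw [hempty] at hmem
    exact hmem
  push_neg at hnt
  obtain ⟨z, hz⟩ := hnt
  have hM0 : (0 : ℝ) ≤ M := (norm_nonneg (a 0)).trans (hM 0)
  set μ : ℕ → ℝ := fun i => (1 / 2 ^ (i + 1) : ℝ) with hμdef
  have hφle : ∀ (i : ℕ) (y : EuclideanSpace ℝ (Fin n)), Metric.infDist y (Λ i) ≤ ‖y‖ := by
    intro i y
    simpa [dist_eq_norm] using Metric.infDist_le_dist_of_mem (h0 i) (x := y)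
  have hφ0 : ∀ (i : ℕ) (y : EuclideanSpace ℝ (Fin n)), 0 ≤ Metric.infDist y (Λ i) :=
    fun i y => Metric.infDist_nonneg
  have hsummand : ∀ (ψ : ℕ → ℝ) (C : ℝ), (∀ i, |ψ i| ≤ C) →
      Summable (fun i => μ i * ψ i ^ 2) := by
    intro ψ C hC
    refine Summable.of_nonneg_of_le (fun i => by positivity) (fun i => ?_)
      (mu_summable.mul_right (C ^ 2))
    exact mul_le_mul_of_nonneg_left
      (by rw [← sq_abs]; exact pow_le_pow_left₀ (abs_nonneg _) (hC i) 2) (mu_pos i).le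
  -- the conic gauge `g`
  set g : EuclideanSpace ℝ (Fin n) → ℝ :=
    fun u => ∑' i, μ i * (Metric.infDist u (Λ i)) ^ 2 with hgdef
  have hgsummable : ∀ u, Summable fun i => μ i * (Metric.infDist u (Λ i)) ^ 2 := fun u =>
    hsummand _ ‖u‖ (fun i => by rw [abs_of_nonneg (hφ0 i u)]; exact hφle i u)
  have hSne : (Metric.sphere (0 : EuclideanSpace ℝ (Fin n)) 1).Nonempty := by
    refine ⟨‖z‖⁻¹ • z, ?_⟩
    simp [norm_smul, inv_mul_cancel₀ (norm_ne_zero_iff.2 hz)]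
  have hgcont : ContinuousOn g (Metric.sphere (0 : EuclideanSpace ℝ (Fin n)) 1) := by
    refine continuousOn_weighted_tsum (fun i => Metric.continuous_infDist_pt (Λ i)) (C := 1) ?_
    intro i x hx
    rw [abs_of_nonneg (hφ0 i x)]
    calc Metric.infDist x (Λ i) ≤ ‖x‖ := hφle i x
      _ = 1 := by simpa [dist_eq_norm] using hx
  obtain ⟨u₀, hu₀S, hu₀min⟩ :=
    (isCompact_sphere (0 : EuclideanSpace ℝ (Fin n)) 1).exists_isMinOn hSne hgcont
  set c := g u₀ with hcdef
  have hcpos : 0 < c := by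
    rcases (tsum_nonneg (fun i => by positivity : ∀ i, 0 ≤ μ i * (Metric.infDist u₀ (Λ i)) ^ 2)).lt_or_eq with h | h
    · exact h
    · exfalso
      have hterm0 : ∀ i, Metric.infDist u₀ (Λ i) = 0 := by
        intro i
        have hle := Summable.le_tsum (hgsummable u₀) i (fun j _ => by positivity)
        have : μ i * (Metric.infDist u₀ (Λ i)) ^ 2 = 0 := le_antisymm (h ▸ hle) (by positivity)
        have h2 := (mul_eq_zero.1 this).resolve_left (mu_pos i).ne'
        exact (pow_eq_zero_iff two_ne_zero).1 h2
      have hu₀mem : u₀ ∈ ⋂ i, Λ i := Set.mem_iInter.2 fun i =>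
        ((hclosed i).mem_iff_infDist_zero ⟨0, h0 i⟩).2 (hterm0 i)
      rw [hnonover] at hu₀mem
      have : ‖u₀‖ = 1 := by simpa [dist_eq_norm] using hu₀S
      rw [Set.mem_singleton_iff.1 hu₀mem] at this
      simp at this
  -- lower bound `g u ≥ c ‖u‖²`
  have hg_lb : ∀ u, c * ‖u‖ ^ 2 ≤ g u := by
    intro u
    rcases eq_or_ne u 0 with rfl | hu
    · simpa using tsum_nonneg (fun i => by positivity :
        ∀ i, 0 ≤ μ i * (Metric.infDist (0 : EuclideanSpace ℝ (Fin n)) (Λ i)) ^ 2)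
    · have hnu : 0 < ‖u‖ := norm_pos_iff.2 hu
      set uu := ‖u‖⁻¹ • u with huudef
      have huuS : uu ∈ Metric.sphere (0 : EuclideanSpace ℝ (Fin n)) 1 := by
        simp [huudef, norm_smul, inv_mul_cancel₀ hnu.ne']
      have hterm : ∀ i, ‖u‖ * Metric.infDist uu (Λ i) ≤ Metric.infDist u (Λ i) := by
        intro i
        have := smul_infDist_le (hcone i) (h0 i) hnu.le uu
        rwa [huudef, smul_smul, mul_inv_cancel₀ hnu.ne', one_smul] at this
      have h1 : c ≤ g uu := hu₀min huuS
      have h2 : g uu * ‖u‖ ^ 2 = ∑' i, μ i * (‖u‖ * Metric.infDist uu (Λ i)) ^ 2 := by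
        rw [hgdef, ← tsum_mul_right]
        exact tsum_congr fun i => by ring
      have h3 : ∑' i, μ i * (‖u‖ * Metric.infDist uu (Λ i)) ^ 2 ≤ g u := by
        refine Summable.tsum_le_tsum (fun i => ?_) (hsummand _ ‖u‖ (fun i => ?_)) (hgsummable u)
        · exact mul_le_mul_of_nonneg_left
            (pow_le_pow_left₀ (mul_nonneg (norm_nonneg u) (hφ0 i uu)) (hterm i) 2) (mu_pos i).le
        · rw [abs_of_nonneg (mul_nonneg (norm_nonneg u) (hφ0 i uu))]
          calc ‖u‖ * Metric.infDist uu (Λ i) ≤ ‖u‖ * ‖uu‖ :=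
                mul_le_mul_of_nonneg_left (hφle i uu) hnu.le
            _ = ‖u‖ := by
                have : ‖uu‖ = 1 := by simpa [dist_eq_norm] using huuS
                rw [this, mul_one]
      calc c * ‖u‖ ^ 2 ≤ g uu * ‖u‖ ^ 2 := mul_le_mul_of_nonneg_right h1 (sq_nonneg _)
        _ = _ := h2
        _ ≤ g u := h3
  -- the minimized functional `f`
  set f : EuclideanSpace ℝ (Fin n) → ℝ :=
    fun x => ∑' i, μ i * (Metric.infDist (x + a i) (Λ i)) ^ 2 with hfdef
  have hφabs : ∀ (i : ℕ) (x : EuclideanSpace ℝ (Fin n)),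
      |Metric.infDist (x + a i) (Λ i)| ≤ ‖x‖ + M := by
    intro i x
    rw [abs_of_nonneg (hφ0 i _)]
    calc Metric.infDist (x + a i) (Λ i) ≤ ‖x + a i‖ := hφle i _
      _ ≤ ‖x‖ + ‖a i‖ := norm_add_le _ _
      _ ≤ ‖x‖ + M := by linarith [hM i]
  have hfsummable : ∀ x, Summable fun i => μ i * (Metric.infDist (x + a i) (Λ i)) ^ 2 :=
    fun x => hsummand _ (‖x‖ + M) (hφabs · x)
  have hf_nonneg : ∀ x, 0 ≤ f x := fun x =>
    tsum_nonneg (fun i => by positivity)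
  -- coercivity
  have hcoer : ∀ x, c / 2 * ‖x‖ ^ 2 - M ^ 2 ≤ f x := by
    intro x
    have hterm : ∀ i, μ i * (Metric.infDist x (Λ i)) ^ 2 ≤
        2 * (μ i * (Metric.infDist (x + a i) (Λ i)) ^ 2) + 2 * (μ i * M ^ 2) := by
      intro i
      have h1 : Metric.infDist x (Λ i) ≤ Metric.infDist (x + a i) (Λ i) + M := by
        have h2 := Metric.infDist_le_infDist_add_dist (x := x) (y := x + a i) (s := Λ i)
        have hd : dist x (x + a i) = ‖a i‖ := by
          simp [dist_eq_norm]
        rw [hd] at h2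
        linarith [hM i]
      have hsq : Metric.infDist x (Λ i) ^ 2 ≤
          2 * Metric.infDist (x + a i) (Λ i) ^ 2 + 2 * M ^ 2 := by
        nlinarith [hφ0 i x, hφ0 i (x + a i),
          sq_nonneg (Metric.infDist (x + a i) (Λ i) - M)]
      calc μ i * (Metric.infDist x (Λ i)) ^ 2
          ≤ μ i * (2 * Metric.infDist (x + a i) (Λ i) ^ 2 + 2 * M ^ 2) :=
            mul_le_mul_of_nonneg_left hsq (mu_pos i).le
        _ = _ := by ring
    have hsum2 : g x ≤ 2 * f x + 2 * M ^ 2 := by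
      have hs1 : Summable (fun i => 2 * (μ i * (Metric.infDist (x + a i) (Λ i)) ^ 2)
          + 2 * (μ i * M ^ 2)) :=
        ((hfsummable x).mul_left 2).add ((mu_summable.mul_right (M ^ 2)).mul_left 2)
      have hle := Summable.tsum_le_tsum hterm (hgsummable x) hs1
      have heq : ∑' i, (2 * (μ i * (Metric.infDist (x + a i) (Λ i)) ^ 2)
          + 2 * (μ i * M ^ 2)) = 2 * f x + 2 * M ^ 2 := by
        have hB : HasSum (fun i => 2 * (μ i * M ^ 2)) (2 * M ^ 2) := by
          simpa [hμdef] using (mu_hasSum.mul_right (M ^ 2)).mul_left 2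
        have hA : HasSum (fun i => 2 * (μ i * (Metric.infDist (x + a i) (Λ i)) ^ 2))
            (2 * f x) := (hfsummable x).hasSum.mul_left 2
        exact (hA.add hB).tsum_eq
      rw [heq] at hle
      exact hle
    nlinarith [hg_lb x]
  -- radius of the ball on which we minimize
  set R := Real.sqrt (2 * (f 0 + M ^ 2 + 1) / c) with hRdef
  have hRarg : 0 < 2 * (f 0 + M ^ 2 + 1) / c := by
    have := hf_nonneg 0
    positivity
  have hR0 : 0 < R := Real.sqrt_pos.2 hRarg
  have hR2 : R ^ 2 = 2 * (f 0 + M ^ 2 + 1) / c := Real.sq_sqrt hRarg.le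
  have hRbig : ∀ x : EuclideanSpace ℝ (Fin n), R ≤ ‖x‖ → f 0 < f x := by
    intro x hx
    have h1 : c / 2 * R ^ 2 - M ^ 2 ≤ c / 2 * ‖x‖ ^ 2 - M ^ 2 := by
      have hRx : R ^ 2 ≤ ‖x‖ ^ 2 := pow_le_pow_left₀ hR0.le hx 2
      nlinarith [hcpos, hRx]
    have h2 : c / 2 * R ^ 2 - M ^ 2 = f 0 + 1 := by
      rw [hR2]; field_simp; ring
    linarith [hcoer x]
  -- existence of a minimizer
  have hfcont : ContinuousOn f (Metric.closedBall (0 : EuclideanSpace ℝ (Fin n)) R) := by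
    refine continuousOn_weighted_tsum
      (φ := fun i x => Metric.infDist (x + a i) (Λ i))
      (fun i => (Metric.continuous_infDist_pt (Λ i)).comp (continuous_id.add continuous_const))
      (C := R + M) ?_
    intro i x hx
    have hxR : ‖x‖ ≤ R := by simpa [dist_eq_norm] using (Metric.mem_closedBall.1 hx)
    calc |Metric.infDist (x + a i) (Λ i)| ≤ ‖x‖ + M := hφabs i x
      _ ≤ R + M := by linarith
  obtain ⟨xb, hxbK, hxbmin⟩ :=
    (isCompact_closedBall (0 : EuclideanSpace ℝ (Fin n)) R).exists_isMinOn
      ⟨0, Metric.mem_closedBall_self hR0.le⟩ hfcont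
  have hxblt : ‖xb‖ < R := by
    by_contra hcon
    push_neg at hcon
    exact absurd (hxbmin (Metric.mem_closedBall_self hR0.le))
      (not_le.2 (hRbig xb hcon))
  -- projections onto the cones
  have hproj : ∀ i, ∃ p ∈ Λ i, Metric.infDist (xb + a i) (Λ i) = dist (xb + a i) p :=
    fun i => (hclosed i).exists_infDist_eq_dist ⟨0, h0 i⟩ _
  choose p hpΛ hpd using hproj
  set v : ℕ → EuclideanSpace ℝ (Fin n) := fun i => (xb + a i) - p i with hvdef
  have hvnorm : ∀ i, ‖v i‖ = Metric.infDist (xb + a i) (Λ i) := fun i => by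
    rw [hpd i, dist_eq_norm]
  have hvfr : ∀ i, v i ∈ frechetNormalCone (Λ i) (p i) := fun i =>
    frechet_of_nearest fun s hs => (hpd i) ▸ Metric.infDist_le_dist_of_mem hs
  have hvbound : ∀ i, ‖v i‖ ≤ ‖xb‖ + M := fun i => by
    rw [hvnorm i]
    have := hφabs i xb
    rwa [abs_of_nonneg (hφ0 i _)] at this
  -- the averaged normal vector
  have hVsummable : Summable (fun i => μ i • v i) := by
    refine Summable.of_norm (Summable.of_nonneg_of_le (fun i => norm_nonneg _)
      (fun i => ?_) (mu_summable.mul_right (‖xb‖ + M)))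
    rw [norm_smul, Real.norm_eq_abs, abs_of_pos (mu_pos i)]
    exact mul_le_mul_of_nonneg_left (hvbound i) (mu_pos i).le
  set V := ∑' i, μ i • v i with hVdef
  have hV : HasSum (fun i => μ i • v i) V := hVsummable.hasSum
  set c₀ := f xb with hc₀def
  have hc₀sum : HasSum (fun i => μ i * ‖v i‖ ^ 2) c₀ := by
    exact (hfsummable xb).hasSum.congr_fun fun i => by rw [hvnorm i]
  -- key quadratic upper estimate at the minimizer
  have hkey : ∀ h : EuclideanSpace ℝ (Fin n),
      f (xb + h) ≤ c₀ + 2 * (inner ℝ h V : ℝ) + ‖h‖ ^ 2 := by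
    intro h
    have hterm : ∀ i, μ i * (Metric.infDist (xb + h + a i) (Λ i)) ^ 2 ≤
        μ i * ‖v i‖ ^ 2 + 2 * (μ i * (inner ℝ h (v i) : ℝ)) + μ i * ‖h‖ ^ 2 := by
      intro i
      have heq : xb + h + a i - p i = v i + h := by
        rw [hvdef]; dsimp only; abel
      have h1 : Metric.infDist (xb + h + a i) (Λ i) ≤ ‖v i + h‖ := by
        calc Metric.infDist (xb + h + a i) (Λ i) ≤ dist (xb + h + a i) (p i) :=
              Metric.infDist_le_dist_of_mem (hpΛ i)
          _ = ‖v i + h‖ := by rw [dist_eq_norm, heq]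
      have h2 : ‖v i + h‖ ^ 2 = ‖v i‖ ^ 2 + 2 * (inner ℝ h (v i) : ℝ) + ‖h‖ ^ 2 := by
        rw [norm_add_sq_real, real_inner_comm]
      have h3 : (Metric.infDist (xb + h + a i) (Λ i)) ^ 2 ≤ ‖v i + h‖ ^ 2 :=
        pow_le_pow_left₀ (hφ0 i _) h1 2
      calc μ i * (Metric.infDist (xb + h + a i) (Λ i)) ^ 2 ≤ μ i * ‖v i + h‖ ^ 2 :=
            mul_le_mul_of_nonneg_left h3 (mu_pos i).le
        _ = μ i * ‖v i‖ ^ 2 + 2 * (μ i * (inner ℝ h (v i) : ℝ)) + μ i * ‖h‖ ^ 2 := by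
            rw [h2]; ring
    have hB : HasSum (fun i => μ i * (inner ℝ h (v i) : ℝ)) ((inner ℝ h V : ℝ)) := by
      have := hV.mapL (innerSL ℝ h)
      simpa [real_inner_smul_right] using this
    have hC : HasSum (fun i => μ i * ‖h‖ ^ 2) (‖h‖ ^ 2) := by
      simpa [hμdef] using mu_hasSum.mul_right (‖h‖ ^ 2)
    have hrhs : HasSum (fun i => μ i * ‖v i‖ ^ 2 + 2 * (μ i * (inner ℝ h (v i) : ℝ))
        + μ i * ‖h‖ ^ 2) (c₀ + 2 * (inner ℝ h V : ℝ) + ‖h‖ ^ 2) :=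
      (hc₀sum.add (hB.mul_left 2)).add hC
    calc f (xb + h) ≤ ∑' i, (μ i * ‖v i‖ ^ 2 + 2 * (μ i * (inner ℝ h (v i) : ℝ))
          + μ i * ‖h‖ ^ 2) := Summable.tsum_le_tsum hterm (hfsummable (xb + h)) hrhs.summable
      _ = c₀ + 2 * (inner ℝ h V : ℝ) + ‖h‖ ^ 2 := hrhs.tsum_eq
  -- stationarity : V = 0
  have hV0 : V = 0 := by
    by_contra hVne
    have hVpos : 0 < ‖V‖ := norm_pos_iff.2 hVne
    set t := min 1 ((R - ‖xb‖) / (‖V‖ + 1)) with htdef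
    have ht0 : 0 < t := lt_min one_pos (div_pos (sub_pos.2 hxblt) (by positivity))
    have ht1 : t ≤ 1 := min_le_left _ _
    have htV : t * ‖V‖ ≤ R - ‖xb‖ := by
      have h1 : t ≤ (R - ‖xb‖) / (‖V‖ + 1) := min_le_right _ _
      have h2 : t * ‖V‖ ≤ ((R - ‖xb‖) / (‖V‖ + 1)) * ‖V‖ :=
        mul_le_mul_of_nonneg_right h1 (norm_nonneg _)
      have h3 : ((R - ‖xb‖) / (‖V‖ + 1)) * ‖V‖ ≤ R - ‖xb‖ := by
        rw [div_mul_eq_mul_div, div_le_iff₀ (by positivity)]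
        nlinarith [hxblt]
      linarith
    have hball : xb + -(t • V) ∈ Metric.closedBall (0 : EuclideanSpace ℝ (Fin n)) R := by
      rw [Metric.mem_closedBall, dist_eq_norm, sub_zero]
      calc ‖xb + -(t • V)‖ ≤ ‖xb‖ + ‖-(t • V)‖ := norm_add_le _ _
        _ = ‖xb‖ + t * ‖V‖ := by
            rw [norm_neg, norm_smul, Real.norm_eq_abs, abs_of_pos ht0]
        _ ≤ R := by linarith
    have hmin : f xb ≤ f (xb + -(t • V)) := hxbmin hball
    have hub := hkey (-(t • V))
    have hin : (inner ℝ (-(t • V)) V : ℝ) = -(t * ‖V‖ ^ 2) := by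
      rw [inner_neg_left, real_inner_smul_left, real_inner_self_eq_norm_sq]
    have hn : ‖-(t • V)‖ ^ 2 = t ^ 2 * ‖V‖ ^ 2 := by
      rw [norm_neg, norm_smul, Real.norm_eq_abs, abs_of_pos ht0, mul_pow]
    rw [hin, hn] at hub
    have hchain : f xb ≤ f xb + (t * ‖V‖ ^ 2) * (t - 2) := by
      calc f xb ≤ c₀ + 2 * -(t * ‖V‖ ^ 2) + t ^ 2 * ‖V‖ ^ 2 := le_trans hmin hub
        _ = f xb + (t * ‖V‖ ^ 2) * (t - 2) := by ring
    have h2 : (t * ‖V‖ ^ 2) * (t - 2) < 0 :=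
      mul_neg_of_pos_of_neg (by positivity) (by linarith)
    linarith
  -- positivity of the minimum value
  have hc₀pos : 0 < c₀ := by
    rcases (hf_nonneg xb).lt_or_eq with hlt | heq
    · exact hlt
    · exfalso
      have hterm0 : ∀ i, v i = 0 := by
        intro i
        have hle := Summable.le_tsum (hfsummable xb) i (fun j _ => by positivity)
        have hle' : μ i * (Metric.infDist (xb + a i) (Λ i)) ^ 2 ≤ f xb := hle
        rw [← heq] at hle'
        have h1 : μ i * (Metric.infDist (xb + a i) (Λ i)) ^ 2 = 0 :=
          le_antisymm hle' (by positivity)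
        have h2 := (mul_eq_zero.1 h1).resolve_left (mu_pos i).ne'
        have h3 := (pow_eq_zero_iff two_ne_zero).1 h2
        rw [← norm_eq_zero, hvnorm i]
        exact h3
      have hxbmem : xb ∈ ⋂ i, (Λ i).translate (a i) := by
        refine Set.mem_iInter.2 fun i => ?_
        show xb + a i ∈ Λ i
        have := hterm0 i
        rw [hvdef] at this
        have : xb + a i = p i := by
          have := sub_eq_zero.1 this
          exact this
        rw [this]
        exact hpΛ i
      rw [hempty] at hxbmem
      exact hxbmem
  -- normalization
  set s := Real.sqrt c₀ with hsdef
  have hs : 0 < s := Real.sqrt_pos.2 hc₀pos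
  have hs2 : s ^ 2 = c₀ := Real.sq_sqrt hc₀pos.le
  refine ⟨p, fun i => s⁻¹ • v i, hpΛ, fun i => frechet_smul (inv_pos.2 hs) (hvfr i),
    fun i => limiting_of_frechet_cone (hcone i) (hpΛ i)
      (frechet_smul (inv_pos.2 hs) (hvfr i)), ?_, ?_⟩
  · have h1 : HasSum (fun i => s⁻¹ • (μ i • v i)) (s⁻¹ • V) := hV.const_smul s⁻¹
    rw [hV0, smul_zero] at h1
    refine h1.congr_fun fun i => ?_
    rw [smul_comm]
  · have h1 : HasSum (fun i => c₀⁻¹ * (μ i * ‖v i‖ ^ 2)) (c₀⁻¹ * c₀) := hc₀sum.mul_left c₀⁻¹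
    rw [inv_mul_cancel₀ hc₀pos.ne'] at h1
    refine h1.congr_fun fun i => ?_
    have h2 : ‖s⁻¹ • v i‖ ^ 2 = c₀⁻¹ * ‖v i‖ ^ 2 := by
      rw [norm_smul, Real.norm_eq_abs, abs_of_pos (inv_pos.2 hs), mul_pow, ← hs2, inv_pow]
    rw [h2]
    ring
end

section
/- Let X be a Hilbert space with orthonormal basis {e_i}_{i∈ℕ} and define closed half-spaces Λ₁ := {x : ⟨x,e₁⟩ ≤ 0} and Λ_i := {x : ⟨x, e_i − e_{i−1}⟩ ≤ 0} for i ≥ 2. Then ⋂_{i=1}^∞ Λ_i = {0} and (Λ₁ − e₁) ∩ ⋂_{i≥2} Λ_i = ∅, yet there exist no normals x*_i ∈ N(0;Λ_i) with Σ_{i=1}^∞ x*_i = 0 and Σ_{i=1}^∞ ‖x*_i‖ > 0. -/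
open Filter Topology

variable {X : Type*} [NormedAddCommGroup X] [InnerProductSpace ℝ X]

/-- The normal cone at the origin to a convex set `Λ` containing `0`
(the polar cone, identified with vectors via the inner product). -/
def polarNormalCone (Λ : Set X) : Set X := {v | ∀ u ∈ Λ, (inner ℝ v u : ℝ) ≤ 0}

lemma polar_halfspace (v w : X)
    (hw : w ∈ polarNormalCone {x : X | (inner ℝ x v : ℝ) ≤ 0}) :
    ∃ l : ℝ, 0 ≤ l ∧ w = l • v := by
  by_cases hv : v = 0
  · refine ⟨0, le_refl 0, ?_⟩
    have hwm : w ∈ {x : X | (inner ℝ x v : ℝ) ≤ 0} := by simp [hv]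
    have := hw w hwm
    have : (inner ℝ w w : ℝ) = 0 := le_antisymm this real_inner_self_nonneg
    simpa using inner_self_eq_zero.mp this
  · have hv2 : (0:ℝ) < ‖v‖ ^ 2 := by
      have : 0 < ‖v‖ := norm_pos_iff.mpr hv
      positivity
    set l : ℝ := (inner ℝ w v : ℝ) / ‖v‖ ^ 2 with hl
    set u : X := w - l • v with hu
    have huv : (inner ℝ u v : ℝ) = 0 := by
      rw [hu, inner_sub_left, real_inner_smul_left, real_inner_self_eq_norm_sq]
      rw [hl, div_mul_cancel₀ _ (ne_of_gt hv2), sub_self]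
    have h1 : (inner ℝ w u : ℝ) ≤ 0 := hw u (by simp [Set.mem_setOf_eq, huv])
    have h2 : (inner ℝ w (-u) : ℝ) ≤ 0 := hw (-u) (by simp [Set.mem_setOf_eq, huv])
    have h3 : (inner ℝ w u : ℝ) = 0 := le_antisymm h1 (by simpa [inner_neg_right] using h2)
    have huu : (inner ℝ u u : ℝ) = 0 := by
      have h4 : (inner ℝ u u : ℝ) = (inner ℝ w u : ℝ) - l * (inner ℝ v u : ℝ) := by
        rw [hu, inner_sub_left, real_inner_smul_left]
      have hvu : (inner ℝ v u : ℝ) = 0 := by rw [real_inner_comm]; exact huv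
      rw [h4, h3, hvu]; ring
    have hu0 : u = 0 := inner_self_eq_zero.mp huu
    have hlnn : 0 ≤ l := by
      have hm : -v ∈ {x : X | (inner ℝ x v : ℝ) ≤ 0} := by
        simp only [Set.mem_setOf_eq, inner_neg_left]
        have := real_inner_self_nonneg (x := v)
        linarith
      have := hw (-v) hm
      rw [inner_neg_right] at this
      have hwv : 0 ≤ (inner ℝ w v : ℝ) := by linarith
      exact div_nonneg hwv (le_of_lt hv2)
    exact ⟨l, hlnn, by rw [← sub_eq_zero]; exact hu0⟩

lemma coeff_tendsto_zero [CompleteSpace X] (e : ℕ → X) (he : Orthonormal ℝ e) (x : X) :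
    Tendsto (fun n => (inner ℝ x (e n) : ℝ)) atTop (𝓝 0) := by
  have hsum : Summable fun i => ‖(inner ℝ (e i) x : ℝ)‖ ^ 2 := he.inner_products_summable x
  have h1 : Tendsto (fun n => ‖(inner ℝ (e n) x : ℝ)‖ ^ 2) atTop (𝓝 0) := hsum.tendsto_atTop_zero
  have h2 : Tendsto (fun n => ‖(inner ℝ (e n) x : ℝ)‖) atTop (𝓝 0) := by
    have := h1.sqrt
    simp only [Real.sqrt_zero] at this
    convert this using 2 with n
    rw [Real.sqrt_sq (norm_nonneg _)]
  have h3 : Tendsto (fun n => (inner ℝ (e n) x : ℝ)) atTop (𝓝 0) :=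
    tendsto_zero_iff_norm_tendsto_zero.mpr h2
  simpa [real_inner_comm] using h3

/-- failure of the conic extremal principle in infinite dimensions.
For the half-spaces `Λ₁ = {x : ⟪x,e₁⟫ ≤ 0}`, `Λ_i = {x : ⟪x, e_i - e_{i-1}⟫ ≤ 0}`
built from an orthonormal basis `e` of a Hilbert space, the nonoverlapping and
extremality conditions hold, yet no nontrivial normals sum to zero. -/
theorem conic_extremal_principle_fails_in_infinite_dimensions
    [CompleteSpace X] (e : ℕ → X) (he : Orthonormal ℝ e)
    (hbasis : (Submodule.span ℝ (Set.range e)).topologicalClosure = ⊤)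
    (Λ : ℕ → Set X)
    (hΛ : Λ 0 = {x | (inner ℝ x (e 0) : ℝ) ≤ 0} ∧
      ∀ k : ℕ, Λ (k + 1) = {x | (inner ℝ x (e (k + 1) - e k) : ℝ) ≤ 0}) :
    (⋂ i, Λ i) = {0} ∧
    ({x | x + e 0 ∈ Λ 0} ∩ ⋂ i : ℕ, Λ (i + 1)) = ∅ ∧
    ¬∃ x : ℕ → X, (∀ i, x i ∈ polarNormalCone (Λ i)) ∧
      HasSum x 0 ∧ 0 < ∑' i, ‖x i‖ := by
  obtain ⟨hΛ0, hΛs⟩ := hΛ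
  have hee : ∀ i j, (inner ℝ (e i) (e j) : ℝ) = if i = j then 1 else 0 := orthonormal_iff_ite.mp he
  refine ⟨?_, ?_, ?_⟩
  · -- Part 1
    ext x
    simp only [Set.mem_iInter, Set.mem_singleton_iff]
    constructor
    · intro hx
      have h0 : (inner ℝ x (e 0) : ℝ) ≤ 0 := by have := hx 0; rwa [hΛ0] at this
      have hstep : ∀ k, (inner ℝ x (e (k+1)) : ℝ) ≤ (inner ℝ x (e k) : ℝ) := by
        intro k
        have := hx (k+1)
        rw [hΛs k] at this
        simp only [Set.mem_setOf_eq, inner_sub_right] at this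
        linarith
      have hanti : Antitone (fun n => (inner ℝ x (e n) : ℝ)) := antitone_nat_of_succ_le hstep
      have hz : ∀ n, (inner ℝ x (e n) : ℝ) = 0 := by
        intro n
        have hle : (inner ℝ x (e n) : ℝ) ≤ 0 := le_trans (hanti (Nat.zero_le n)) h0
        have hge : (0:ℝ) ≤ inner ℝ x (e n) := by
          refine le_of_tendsto (coeff_tendsto_zero e he x) ?_
          filter_upwards [eventually_ge_atTop n] with m hm
          exact hanti hm
        linarith
      have hker : Submodule.span ℝ (Set.range e) ≤ LinearMap.ker (innerSL ℝ x : X →ₗ[ℝ] ℝ) := by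
        rw [Submodule.span_le]
        rintro _ ⟨n, rfl⟩
        simp [LinearMap.mem_ker, hz n]
      have hxo : x ∈ (Submodule.span ℝ (Set.range e))ᗮ := by
        rw [Submodule.mem_orthogonal]
        intro u hu
        have := hker hu
        rw [LinearMap.mem_ker] at this
        simp only [ContinuousLinearMap.coe_coe, innerSL_apply_apply] at this
        rw [real_inner_comm] at this
        exact this
      rw [Submodule.topologicalClosure_eq_top_iff] at hbasis
      rw [hbasis] at hxo
      simpa using hxo
    · rintro rfl i
      cases i with
      | zero => rw [hΛ0]; simp
      | succ k => rw [hΛs k]; simp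
  · -- Part 2
    rw [Set.eq_empty_iff_forall_notMem]
    rintro x ⟨hx0, hxs⟩
    simp only [Set.mem_setOf_eq] at hx0
    rw [hΛ0] at hx0
    simp only [Set.mem_setOf_eq, inner_add_left] at hx0
    have he00 : (inner ℝ (e 0) (e 0) : ℝ) = 1 := by simpa using hee 0 0
    have h0 : (inner ℝ x (e 0) : ℝ) ≤ -1 := by rw [he00] at hx0; linarith
    simp only [Set.mem_iInter] at hxs
    have hstep : ∀ k, (inner ℝ x (e (k+1)) : ℝ) ≤ (inner ℝ x (e k) : ℝ) := by
      intro k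
      have := hxs k
      rw [hΛs k] at this
      simp only [Set.mem_setOf_eq, inner_sub_right] at this
      linarith
    have hanti : Antitone (fun n => (inner ℝ x (e n) : ℝ)) := antitone_nat_of_succ_le hstep
    have : (0:ℝ) ≤ -1 := by
      refine le_of_tendsto (coeff_tendsto_zero e he x) ?_
      filter_upwards [eventually_ge_atTop 0] with m _
      exact le_trans (hanti (Nat.zero_le m)) h0
    linarith
  · -- Part 3
    rintro ⟨x, hxc, hsum, hpos⟩
    set v : ℕ → X := fun n => match n with | 0 => e 0 | (k+1) => e (k+1) - e k with hv
    have hx' : ∀ i, ∃ l : ℝ, 0 ≤ l ∧ x i = l • v i := by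
      intro i
      cases i with
      | zero =>
        refine polar_halfspace (v 0) (x 0) ?_
        have := hxc 0
        rwa [hΛ0] at this
      | succ k =>
        refine polar_halfspace (v (k+1)) (x (k+1)) ?_
        have := hxc (k+1)
        rwa [hΛs k] at this
    choose lam hlam0 hlamx using hx'
    have hvin : ∀ i n, (inner ℝ (e n) (v i) : ℝ) =
        (if i = n then 1 else 0) - (if i = n + 1 then 1 else 0) := by
      intro i n
      cases i with
      | zero =>
        simp only [hv]
        rw [hee n 0]
        by_cases h : n = 0 <;> simp [h, eq_comm]
      | succ k =>
        simp only [hv, inner_sub_right]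
        rw [hee n (k+1), hee n k]
        by_cases h : n = k + 1 <;> by_cases h' : n = k <;>
          simp [h, h', eq_comm]
    have hn : ∀ n, lam n = lam (n+1) := by
      intro n
      have h1 : HasSum (fun i => (inner ℝ (e n) (x i) : ℝ)) 0 := by
        have := (innerSL ℝ (e n)).hasSum hsum
        simpa using this
      have h2 : HasSum (fun i : ℕ =>
          (if i = n then lam n else 0) + (if i = n+1 then -lam (n+1) else 0))
          (lam n + -lam (n+1)) :=
        (hasSum_ite_eq n (lam n)).add (hasSum_ite_eq (n+1) (-lam (n+1)))
      have heq : (fun i => (inner ℝ (e n) (x i) : ℝ)) = fun i : ℕ =>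
          (if i = n then lam n else 0) + (if i = n+1 then -lam (n+1) else 0) := by
        funext i
        rw [hlamx i, inner_smul_right, hvin i n]
        by_cases h : i = n
        · have h' : ¬ i = n + 1 := by omega
          subst h
          simp
        · by_cases h' : i = n+1
          · subst h'
            simp [h]
          · simp [h, h']
      rw [← heq] at h2
      have := h1.unique h2
      linarith
    have hconst : ∀ n, lam n = lam 0 := by
      intro n
      induction n with
      | zero => rfl
      | succ k ih => rw [← hn k]; exact ih
    have hnorm2 : ∀ n, ‖x (n+1)‖ ^ 2 = lam 0 ^ 2 * 2 := by
      intro n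
      have hv2 : ‖v (n+1)‖ ^ 2 = 2 := by
        rw [← real_inner_self_eq_norm_sq]
        simp only [hv, inner_sub_left, inner_sub_right]
        rw [hee (n+1) (n+1), hee (n+1) n, hee n (n+1), hee n n]
        have h1 : ¬ (n+1 = n) := by omega
        have h2 : ¬ (n = n+1) := by omega
        simp [h1, h2]
        norm_num
      rw [hlamx (n+1), norm_smul, mul_pow, hv2, hconst (n+1)]
      simp [Real.norm_eq_abs, sq_abs]
    have hx0lim : Tendsto x atTop (𝓝 0) := by
      have := hsum.summable.tendsto_cofinite_zero
      rwa [Nat.cofinite_eq_atTop] at this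
    have hn2 : Tendsto (fun n => ‖x (n+1)‖ ^ 2) atTop (𝓝 0) := by
      have : Tendsto (fun n => ‖x n‖ ^ 2) atTop (𝓝 0) := by
        have := (hx0lim.norm).pow 2
        simpa using this
      exact this.comp (tendsto_add_atTop_nat 1)
    have hc : Tendsto (fun _ : ℕ => lam 0 ^ 2 * 2) atTop (𝓝 0) := by
      refine hn2.congr ?_
      intro n
      exact hnorm2 n
    have hl0 : lam 0 = 0 := by
      have := tendsto_nhds_unique hc tendsto_const_nhds
      have h22 : lam 0 ^ 2 = 0 := by linarith
      exact pow_eq_zero_iff (by norm_num) |>.mp h22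
    have hxall : ∀ i, x i = 0 := by
      intro i
      rw [hlamx i, hconst i, hl0, zero_smul]
    have hts : ∑' i, ‖x i‖ = 0 := by simp [hxall]
    linarith
end

section
/- Let {Λ_i}_{i∈ℕ} be a countable system of closed cones in ℝⁿ satisfying the normal qualification condition: [Σ_{i=1}^∞ x*_i = 0 with x*_i ∈ N(0;Λ_i)] implies x*_i = 0 for all i. Then for every Fréchet normal x* ∈ N̂(0; ⋂_{i=1}^∞ Λ_i) and every ε > 0 there exist x*_i ∈ N(0;Λ_i), i ∈ ℕ, with x* ∈ Σ_{i=1}^∞ 2^{-i} x*_i + ε𝔹*. -/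
open Filter Topology

variable {E : Type*} [NormedAddCommGroup E] [InnerProductSpace ℝ E]

/-- The normal qualification condition for a countable system of cones. -/
def NormalQualification (n : ℕ) (Λ : ℕ → Set (EuclideanSpace ℝ (Fin n))) : Prop :=
  ∀ x : ℕ → EuclideanSpace ℝ (Fin n),
    (∀ i, x i ∈ limitingNormalCone (Λ i) 0) → HasSum x 0 → ∀ i, x i = 0

lemma isEpsNormal_prox {Λ : Set E} {x p : E} (hnear : ∀ z ∈ Λ, dist x p ≤ dist x z)
    (t : ℝ) (ht : 0 ≤ t) : IsEpsNormal 0 (t • (x - p)) Λ p := by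
  intro η hη
  refine ⟨2 * η / (t + 1), by positivity, fun z hz hzlt => ?_⟩
  have key : 2 * (inner ℝ (x - p) (z - p) : ℝ) ≤ ‖z - p‖ ^ 2 := by
    have h1 : ‖x - p‖ ≤ ‖x - z‖ := by
      simpa [dist_eq_norm] using hnear z hz
    have h2 : ‖x - z‖ ^ 2 = ‖x - p‖ ^ 2 - 2 * (inner ℝ (x - p) (z - p) : ℝ) + ‖z - p‖ ^ 2 := by
      have : x - z = (x - p) - (z - p) := by abel
      rw [this, norm_sub_sq_real]
    nlinarith [norm_nonneg (x - p), norm_nonneg (x - z)]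
  have hsm : (inner ℝ (t • (x - p)) (z - p) : ℝ) = t * (inner ℝ (x - p) (z - p) : ℝ) :=
    real_inner_smul_left _ _ _
  rw [hsm]
  have hnn : (0:ℝ) ≤ ‖z - p‖ := norm_nonneg _
  have hb : t * ‖z - p‖ ≤ 2 * η := by
    have ht1 : t / (t + 1) ≤ 1 := by
      rw [div_le_one (by linarith)]; linarith
    calc t * ‖z - p‖ ≤ t * (2 * η / (t + 1)) := by nlinarith
      _ = (t / (t + 1)) * (2 * η) := by ring
      _ ≤ 1 * (2 * η) := by nlinarith
      _ = 2 * η := by ring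
  nlinarith [sq_nonneg ‖z - p‖]

lemma isEpsNormal_cone_smul {Λ : Set E} (hcone : IsConeSet Λ) {y p : E}
    (h : IsEpsNormal 0 y Λ p) {t : ℝ} (ht : 0 < t) : IsEpsNormal 0 y Λ (t • p) := by
  intro η hη
  obtain ⟨δ, hδ, hd⟩ := h η hη
  refine ⟨t * δ, by positivity, fun z hz hlt => ?_⟩
  have hz' : t⁻¹ • z ∈ Λ := hcone t⁻¹ (by positivity) z hz
  have hrel : t⁻¹ • z - p = t⁻¹ • (z - t • p) := by
    rw [smul_sub, smul_smul, inv_mul_cancel₀ ht.ne', one_smul]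
  have hlt' : ‖t⁻¹ • z - p‖ < δ := by
    rw [hrel, norm_smul, Real.norm_eq_abs, abs_of_pos (by positivity)]
    rw [inv_mul_lt_iff₀ ht]
    linarith [hlt]
  have h2 := hd _ hz' hlt'
  have hexp : z - t • p = t • (t⁻¹ • z - p) := by
    rw [smul_sub, smul_smul, mul_inv_cancel₀ ht.ne', one_smul]
  rw [hexp, real_inner_smul_right, norm_smul, Real.norm_eq_abs, abs_of_pos ht]
  calc t * (inner ℝ y (t⁻¹ • z - p) : ℝ) ≤ t * ((0 + η) * ‖t⁻¹ • z - p‖) :=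
        mul_le_mul_of_nonneg_left h2 ht.le
    _ = (0 + η) * (t * ‖t⁻¹ • z - p‖) := by ring

lemma mem_limiting_of_eps_normal {Λ : Set E} (hcone : IsConeSet Λ) {p y : E} (hp : p ∈ Λ)
    (hy : IsEpsNormal 0 y Λ p) : y ∈ limitingNormalCone Λ 0 := by
  refine ⟨fun _ => 0, fun m => (1 / (m + 1) : ℝ) • p, fun _ => y,
    fun _ => le_refl 0, tendsto_const_nhds, fun m => hcone _ (by positivity) p hp, ?_,
    tendsto_const_nhds, fun m => isEpsNormal_cone_smul hcone hy (by positivity)⟩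
  have h1 : Tendsto (fun m : ℕ => (1 / (m + 1) : ℝ)) atTop (𝓝 0) :=
    tendsto_one_div_add_atTop_nhds_zero_nat
  simpa using h1.smul_const p


set_option maxHeartbeats 2000000 in
/-- fuzzy intersection rule for Fréchet normals to countable
intersections of cones. -/
theorem fuzzy_intersection_rule (n : ℕ) (Λ : ℕ → Set (EuclideanSpace ℝ (Fin n)))
    (hcone : ∀ i, IsConeSet (Λ i)) (hclosed : ∀ i, IsClosed (Λ i))
    (h0 : ∀ i, (0 : EuclideanSpace ℝ (Fin n)) ∈ Λ i)
    (hqc : NormalQualification n Λ)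
    (v : EuclideanSpace ℝ (Fin n)) (hv : v ∈ frechetNormalCone (⋂ i, Λ i) 0)
    (ε : ℝ) (hε : 0 < ε) :
    ∃ x : ℕ → EuclideanSpace ℝ (Fin n),
      (∀ i, x i ∈ limitingNormalCone (Λ i) 0) ∧
      ∃ s, HasSum (fun i => (1 / 2 ^ (i + 1) : ℝ) • x i) s ∧ ‖v - s‖ ≤ ε := by
  classical
  set w : ℕ → ℝ := fun i => (1 / 2 ^ (i + 1) : ℝ) with hwdef
  have hwpos : ∀ i, 0 < w i := fun i => by positivity
  -- Step A : v is globally "polar" to the intersection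
  have hA : ∀ z : EuclideanSpace ℝ (Fin n), (∀ i, z ∈ Λ i) → (inner ℝ v z : ℝ) ≤ 0 := by
    intro z hz
    by_contra hpos
    push_neg at hpos
    have hzne : z ≠ 0 := by
      rintro rfl; simp at hpos
    have hznorm : 0 < ‖z‖ := norm_pos_iff.mpr hzne
    have hηpos : 0 < (inner ℝ v z : ℝ) / (2 * ‖z‖) := by positivity
    obtain ⟨δ, hδ, hd⟩ := hv _ hηpos
    set t : ℝ := δ / (2 * ‖z‖) with htd
    have htpos : 0 < t := by positivity
    have hmem : t • z ∈ ⋂ i, Λ i := Set.mem_iInter.mpr fun i => hcone i t htpos.le z (hz i)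
    have htz : ‖t • z - 0‖ = t * ‖z‖ := by
      rw [sub_zero, norm_smul, Real.norm_eq_abs, abs_of_pos htpos]
    have htz2 : t * ‖z‖ = δ / 2 := by
      rw [htd]; field_simp
    have hlt : ‖t • z - 0‖ < δ := by rw [htz, htz2]; linarith
    have := hd _ hmem hlt
    rw [sub_zero, real_inner_smul_right] at this
    have hn : ‖t • z‖ = t * ‖z‖ := by
      rw [norm_smul, Real.norm_eq_abs, abs_of_pos htpos]
    rw [hn] at this
    -- this : t * ⟪v,z⟫ ≤ (0 + ⟪v,z⟫/(2‖z‖)) * (t * ‖z‖)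
    have hkey : ((inner ℝ v z : ℝ) / (2 * ‖z‖)) * ‖z‖ = (inner ℝ v z : ℝ) / 2 := by
      field_simp
    nlinarith [mul_pos htpos hpos]
  -- the penalized minimization problems
  set B := Metric.closedBall (0 : EuclideanSpace ℝ (Fin n)) 1 with hB
  have hBc : IsCompact B := isCompact_closedBall _ _
  have hB0 : (0 : EuclideanSpace ℝ (Fin n)) ∈ B := Metric.mem_closedBall_self zero_le_one
  set F : ℕ → EuclideanSpace ℝ (Fin n) → ℝ := fun k z =>
    -(inner ℝ v z : ℝ) + ((k : ℝ) + 1) *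
      (∑ i ∈ Finset.range (k+1), w i * (Metric.infDist z (Λ i))^2) + ‖z‖^2 with hF
  have hFcont : ∀ k, Continuous (F k) := by
    intro k
    refine Continuous.add (Continuous.add ?_ ?_) (continuous_norm.pow 2)
    · exact (Continuous.inner continuous_const continuous_id).neg
    · exact continuous_const.mul (continuous_finset_sum _ fun i _ =>
        continuous_const.mul ((Metric.continuous_infDist_pt _).pow 2))
  have hex : ∀ k, ∃ xk ∈ B, IsMinOn (F k) B xk := fun k =>
    hBc.exists_isMinOn ⟨0, hB0⟩ (hFcont k).continuousOn
  choose x hxB hxmin using hex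
  have hxball : ∀ k, ‖x k‖ ≤ 1 := fun k => by
    simpa [hB, mem_closedBall_zero_iff] using hxB k
  have hF0 : ∀ k, F k 0 = 0 := by
    intro k
    simp [hF, Metric.infDist_zero_of_mem (h0 _)]
  have hFle : ∀ k, F k (x k) ≤ 0 := by
    intro k
    have := isMinOn_iff.mp (hxmin k) 0 hB0
    rwa [hF0 k] at this
  have hpen : ∀ k : ℕ, 0 ≤ ((k : ℝ) + 1) *
      (∑ i ∈ Finset.range (k+1), w i * (Metric.infDist (x k) (Λ i))^2) := by
    intro k
    have : 0 ≤ ∑ i ∈ Finset.range (k+1), w i * (Metric.infDist (x k) (Λ i))^2 :=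
      Finset.sum_nonneg fun i _ => by positivity
    positivity
  have h2 : ∀ k, ‖x k‖^2 ≤ (inner ℝ v (x k) : ℝ) := by
    intro k
    have h := hFle k
    simp only [hF] at h
    have := hpen k
    linarith
  have hvk : ∀ k, (inner ℝ v (x k) : ℝ) ≤ ‖v‖ := by
    intro k
    calc (inner ℝ v (x k) : ℝ) ≤ ‖v‖ * ‖x k‖ := real_inner_le_norm _ _
      _ ≤ ‖v‖ * 1 := by nlinarith [norm_nonneg v, hxball k]
      _ = ‖v‖ := mul_one _
  have h3 : ∀ (k i : ℕ), i < k + 1 →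
      ((k : ℝ) + 1) * (w i * (Metric.infDist (x k) (Λ i))^2) ≤ ‖v‖ := by
    intro k i hik
    have hsingle : w i * (Metric.infDist (x k) (Λ i))^2 ≤
        ∑ j ∈ Finset.range (k+1), w j * (Metric.infDist (x k) (Λ j))^2 :=
      Finset.single_le_sum (f := fun j => w j * (Metric.infDist (x k) (Λ j))^2)
        (fun j _ => by positivity) (Finset.mem_range.mpr hik)
    have h := hFle k
    simp only [hF] at h
    have hk1 : (0:ℝ) ≤ (k : ℝ) + 1 := by positivity
    have := hvk k
    nlinarith [sq_nonneg ‖x k‖, h2 k]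
  -- find k with small minimizer
  set r : ℝ := min (ε / 2) (2⁻¹) with hr
  have hrpos : 0 < r := lt_min (by linarith) (by norm_num)
  have hexk : ∃ k, ‖x k‖ < r := by
    by_contra hcon
    push_neg at hcon
    obtain ⟨xb, hxbB, φ, hφmono, hφtend⟩ := hBc.tendsto_subseq hxB
    have hxbΛ : ∀ i, xb ∈ Λ i := by
      intro i
      have hcont : Tendsto (fun j => Metric.infDist ((x ∘ φ) j) (Λ i)) atTop
          (𝓝 (Metric.infDist xb (Λ i))) :=
        ((Metric.continuous_infDist_pt (Λ i)).tendsto xb).comp hφtend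
      have hsq : Tendsto (fun j => (Metric.infDist ((x ∘ φ) j) (Λ i))^2) atTop
          (𝓝 ((Metric.infDist xb (Λ i))^2)) := hcont.pow 2
      have hbound : ∀ᶠ j : ℕ in atTop, (Metric.infDist ((x ∘ φ) j) (Λ i))^2 ≤
          (‖v‖ * 2^(i+1)) / ((j : ℝ) + 1) := by
        filter_upwards [eventually_ge_atTop i] with j hij
        have hij' : i < φ j + 1 := Nat.lt_succ_of_le (le_trans hij hφmono.le_apply)
        have h3' := h3 (φ j) i hij'
        have hwv : w i = 1 / 2^(i+1) := rfl
        have hle : (j : ℝ) ≤ (φ j : ℝ) := Nat.cast_le.mpr hφmono.le_apply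
        have hpos1 : (0:ℝ) < (j:ℝ) + 1 := by positivity
        have h2pow : (0:ℝ) < (2:ℝ)^(i+1) := by positivity
        rw [hwv] at h3'
        rw [le_div_iff₀ hpos1]
        simp only [Function.comp_apply]
        set d := Metric.infDist (x (φ j)) (Λ i) with hd
        have hA1 : (((φ j : ℝ)+1) * (1/2^(i+1) * d^2)) * 2^(i+1) ≤ ‖v‖ * 2^(i+1) :=
          mul_le_mul_of_nonneg_right h3' h2pow.le
        have hA2 : (((φ j : ℝ)+1) * (1/2^(i+1) * d^2)) * 2^(i+1) = ((φ j : ℝ)+1) * d^2 := by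
          field_simp
        rw [hA2] at hA1
        nlinarith [sq_nonneg d]
      have hzero : Tendsto (fun j => (Metric.infDist ((x ∘ φ) j) (Λ i))^2) atTop (𝓝 0) := by
        have htend : Tendsto (fun j : ℕ => (‖v‖ * 2^(i+1)) / ((j : ℝ) + 1)) atTop (𝓝 0) := by
          have := tendsto_one_div_add_atTop_nhds_zero_nat (𝕜 := ℝ)
          have h2 := this.const_mul (‖v‖ * 2^(i+1))
          simpa [div_eq_mul_inv, mul_comm, mul_assoc, one_div] using h2
        exact squeeze_zero' (Eventually.of_forall fun j => sq_nonneg _) hbound htend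
      have : (Metric.infDist xb (Λ i))^2 = 0 := tendsto_nhds_unique hsq hzero
      have hdist0 : Metric.infDist xb (Λ i) = 0 := by
        nlinarith [Metric.infDist_nonneg (x := xb) (s := Λ i)]
      exact ((hclosed i).mem_iff_infDist_zero ⟨0, h0 i⟩).mpr hdist0
    have hnile : ‖xb‖^2 ≤ (inner ℝ v xb : ℝ) := by
      have hn : Tendsto (fun j => ‖(x ∘ φ) j‖^2) atTop (𝓝 (‖xb‖^2)) :=
        ((continuous_norm.pow 2).tendsto xb).comp hφtend
      have hi : Tendsto (fun j => (inner ℝ v ((x ∘ φ) j) : ℝ)) atTop (𝓝 (inner ℝ v xb : ℝ)) :=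
        ((Continuous.inner continuous_const continuous_id).tendsto xb).comp hφtend
      exact le_of_tendsto_of_tendsto' hn hi fun j => h2 (φ j)
    have hxb0 : xb = 0 := by
      have h1 : (inner ℝ v xb : ℝ) ≤ 0 := hA xb hxbΛ
      have h2 : ‖xb‖^2 ≤ 0 := le_trans hnile h1
      have := norm_nonneg xb
      have : ‖xb‖ = 0 := by nlinarith
      exact norm_eq_zero.mp this
    have hge : r ≤ ‖xb‖ := by
      have hn : Tendsto (fun j => ‖(x ∘ φ) j‖) atTop (𝓝 ‖xb‖) :=
        (continuous_norm.tendsto xb).comp hφtend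
      exact ge_of_tendsto hn (Eventually.of_forall fun j => hcon (φ j))
    rw [hxb0] at hge
    simp at hge
    linarith
  obtain ⟨k, hk⟩ := hexk
  have hnear : ∀ i, ∃ p ∈ Λ i, Metric.infDist (x k) (Λ i) = dist (x k) p :=
    fun i => (hclosed i).exists_infDist_eq_dist ⟨0, h0 i⟩ (x k)
  choose p hpΛ hpd using hnear
  set X := x k with hX
  set K : ℝ := (k : ℝ) + 1 with hK
  have hKpos : (0:ℝ) < K := by rw [hK]; positivity
  set c : ℝ := ∑ i ∈ Finset.range (k+1), w i with hc
  have hcpos : 0 < c :=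
    Finset.sum_pos (fun i _ => hwpos i) ⟨0, Finset.mem_range.mpr (Nat.succ_pos k)⟩
  set q : EuclideanSpace ℝ (Fin n) := ∑ i ∈ Finset.range (k+1), w i • p i with hq
  set a : ℝ := 1 + K * c with ha
  have hapos : 0 < a := by rw [ha]; nlinarith
  set b : EuclideanSpace ℝ (Fin n) := v + (2*K) • q with hb
  set m : EuclideanSpace ℝ (Fin n) := (2*a)⁻¹ • b with hm
  have hFform : ∀ z : EuclideanSpace ℝ (Fin n), F k z =
      -(inner ℝ v z : ℝ) + K * (∑ i ∈ Finset.range (k+1), w i * (Metric.infDist z (Λ i))^2)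
        + ‖z‖^2 := by
    intro z
    simp only [hF]
    rw [hK]
  have hquad : ∀ z : EuclideanSpace ℝ (Fin n),
      -(inner ℝ v z : ℝ) + K * (∑ i ∈ Finset.range (k+1), w i * ‖z - p i‖^2) + ‖z‖^2
        = a * ‖z‖^2 - (inner ℝ b z : ℝ)
          + K * (∑ i ∈ Finset.range (k+1), w i * ‖p i‖^2) := by
    intro z
    have hterm : ∀ i ∈ Finset.range (k+1),
        w i * ‖z - p i‖^2
          = (w i * ‖z‖^2 - 2 * (w i * (inner ℝ z (p i) : ℝ))) + w i * ‖p i‖^2 := by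
      intro i _
      rw [norm_sub_sq_real]
      ring
    rw [Finset.sum_congr rfl hterm, Finset.sum_add_distrib, Finset.sum_sub_distrib]
    have hsum1 : ∑ i ∈ Finset.range (k+1), w i * ‖z‖^2 = c * ‖z‖^2 := by
      rw [hc, Finset.sum_mul]
    have hsum2 : ∑ i ∈ Finset.range (k+1), 2 * (w i * (inner ℝ z (p i) : ℝ))
        = 2 * (inner ℝ z q : ℝ) := by
      rw [hq, inner_sum, Finset.mul_sum]
      refine Finset.sum_congr rfl fun i _ => ?_
      rw [real_inner_smul_right]
    have hbz : (inner ℝ b z : ℝ) = (inner ℝ v z : ℝ) + (2*K) * (inner ℝ z q : ℝ) := by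
      rw [hb, inner_add_left, real_inner_smul_left, real_inner_comm q z]
    rw [hsum1, hsum2, hbz, ha]
    ring
  have hid : ∀ z : EuclideanSpace ℝ (Fin n),
      a * ‖z - m‖^2 = a * ‖z‖^2 - (inner ℝ b z : ℝ) + a * ‖m‖^2 := by
    intro z
    have hb2 : b = (2*a) • m := by
      rw [hm, smul_smul, mul_inv_cancel₀ (mul_pos two_pos hapos).ne', one_smul]
    have hbm : (inner ℝ b z : ℝ) = 2 * a * (inner ℝ z m : ℝ) := by
      rw [hb2, real_inner_smul_left, real_inner_comm]
    rw [norm_sub_sq_real, hbm]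
    ring
  have hmajor : ∀ z : EuclideanSpace ℝ (Fin n), F k z ≤ a * ‖z‖^2 - (inner ℝ b z : ℝ)
      + K * (∑ i ∈ Finset.range (k+1), w i * ‖p i‖^2) := by
    intro z
    rw [hFform z, ← hquad z]
    have hs : ∑ i ∈ Finset.range (k+1), w i * (Metric.infDist z (Λ i))^2
        ≤ ∑ i ∈ Finset.range (k+1), w i * ‖z - p i‖^2 := by
      refine Finset.sum_le_sum fun i _ => ?_
      have hle : Metric.infDist z (Λ i) ≤ ‖z - p i‖ := by
        rw [← dist_eq_norm]; exact Metric.infDist_le_dist_of_mem (hpΛ i)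
      have h0le : 0 ≤ Metric.infDist z (Λ i) := Metric.infDist_nonneg
      exact mul_le_mul_of_nonneg_left (pow_le_pow_left₀ h0le hle 2) (hwpos i).le
    have := mul_le_mul_of_nonneg_left hs hKpos.le
    linarith
  have hexact : F k X = a * ‖X‖^2 - (inner ℝ b X : ℝ)
      + K * (∑ i ∈ Finset.range (k+1), w i * ‖p i‖^2) := by
    rw [hFform X, ← hquad X]
    have hs : ∑ i ∈ Finset.range (k+1), w i * (Metric.infDist X (Λ i))^2
        = ∑ i ∈ Finset.range (k+1), w i * ‖X - p i‖^2 :=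
      Finset.sum_congr rfl fun i _ => by rw [hpd i, dist_eq_norm]
    rw [hs]
  have hquadmin : ∀ z ∈ B, ‖X - m‖^2 ≤ ‖z - m‖^2 := by
    intro z hzB
    have h1 : F k (x k) ≤ F k z := isMinOn_iff.mp (hxmin k) z hzB
    rw [← hX, hexact] at h1
    have h2' := hmajor z
    have h4 := hid X
    have h5 := hid z
    have h6 : a * ‖X - m‖^2 ≤ a * ‖z - m‖^2 := by linarith
    exact le_of_mul_le_mul_left h6 hapos
  have hXlt1 : ‖X‖ < 1 := by
    have h1 : r ≤ 2⁻¹ := min_le_right _ _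
    have : ‖X‖ < 2⁻¹ := lt_of_lt_of_le hk h1
    linarith
  have hXm : X = m := by
    by_contra hne
    have hu : 0 < ‖m - X‖ := by
      rw [norm_pos_iff, sub_ne_zero]
      exact fun h => hne h.symm
    set t : ℝ := min (1/2) ((1 - ‖X‖)/‖m - X‖) with htdef
    have htpos : 0 < t := lt_min (by norm_num) (div_pos (by linarith) hu)
    have htle : t * ‖m - X‖ ≤ 1 - ‖X‖ := by
      have h1 : t ≤ (1 - ‖X‖)/‖m - X‖ := min_le_right _ _
      rw [le_div_iff₀ hu] at h1
      exact h1
    have hzB : X + t • (m - X) ∈ B := by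
      rw [hB, mem_closedBall_zero_iff]
      calc ‖X + t • (m - X)‖ ≤ ‖X‖ + ‖t • (m - X)‖ := norm_add_le _ _
        _ = ‖X‖ + t * ‖m - X‖ := by rw [norm_smul, Real.norm_eq_abs, abs_of_pos htpos]
        _ ≤ ‖X‖ + (1 - ‖X‖) := by linarith
        _ = 1 := by ring
    have hq2 := hquadmin _ hzB
    have hrw : X + t • (m - X) - m = (1 - t) • (X - m) := by
      rw [sub_smul, one_smul, smul_sub, smul_sub]
      abel
    rw [hrw, norm_smul, Real.norm_eq_abs] at hq2
    have ht12 : t ≤ 1/2 := min_le_left _ _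
    rw [abs_of_pos (by linarith : (0:ℝ) < 1 - t)] at hq2
    have hXmpos : 0 < ‖X - m‖ := by rw [norm_sub_rev]; exact hu
    have harith : ∀ d s : ℝ, 0 < d → 0 < s → s ≤ 1/2 → d^2 ≤ ((1-s)*d)^2 → False := by
      intro d s hd hs hs2 hle
      nlinarith [mul_pos hs (mul_pos hd hd)]
    exact harith _ _ hXmpos htpos ht12 hq2
  have hbeq : (2*a) • X = b := by
    rw [hXm, hm, smul_smul, mul_inv_cancel₀ (mul_pos two_pos hapos).ne', one_smul]
  set y : ℕ → EuclideanSpace ℝ (Fin n) :=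
    fun i => if i < k + 1 then (2*K) • (X - p i) else 0 with hy
  have hww : ∀ i : ℕ, (1 / 2 ^ (i + 1) : ℝ) = w i := fun i => rfl
  have hsum : ∑ i ∈ Finset.range (k+1), (1 / 2 ^ (i + 1) : ℝ) • y i = v - (2:ℝ) • X := by
    simp only [hww]
    have hyi : ∀ i ∈ Finset.range (k+1),
        w i • y i = (2*K) • (w i • X) - (2*K) • (w i • p i) := by
      intro i hi
      rw [hy]
      simp only [if_pos (Finset.mem_range.mp hi)]
      rw [smul_comm, smul_sub, smul_sub]
    rw [Finset.sum_congr rfl hyi, Finset.sum_sub_distrib, ← Finset.smul_sum, ← Finset.smul_sum]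
    have hsx : ∑ i ∈ Finset.range (k+1), w i • X = c • X := by
      rw [hc, ← Finset.sum_smul]
    rw [hsx, ← hq]
    have hveq : v = (2*a) • X - (2*K) • q := by
      rw [hbeq, hb]
      abel
    rw [hveq, ha, smul_smul]
    have hcoef : (2*(1+K*c)) • X = (2*K*c) • X + (2:ℝ) • X := by
      rw [← add_smul]; congr 1; ring
    rw [hcoef]
    abel
  refine ⟨y, ?_, v - (2:ℝ) • X, ?_, ?_⟩
  · intro i
    by_cases hik : i < k + 1
    · have hnear' : ∀ z ∈ Λ i, dist X (p i) ≤ dist X z := fun z hz => by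
        rw [← hpd i]; exact Metric.infDist_le_dist_of_mem hz
      have hEps := isEpsNormal_prox hnear' (2*K) (by positivity)
      have hyv : y i = (2*K) • (X - p i) := by rw [hy]; simp [hik]
      rw [hyv]
      exact mem_limiting_of_eps_normal (hcone i) (hpΛ i) hEps
    · have hyv : y i = 0 := by rw [hy]; simp [hik]
      rw [hyv]
      refine mem_limiting_of_eps_normal (hcone i) (h0 i) ?_
      intro η hη
      refine ⟨1, one_pos, fun z hz hlt => ?_⟩
      rw [inner_zero_left]
      positivity
  · have hzero : ∀ i ∉ Finset.range (k+1), (1 / 2 ^ (i + 1) : ℝ) • y i = 0 := by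
      intro i hi
      have hik : ¬ i < k + 1 := by simpa [Finset.mem_range] using hi
      rw [hy]
      simp [hik]
    have hhs : HasSum _ _ := hasSum_sum_of_ne_finset_zero hzero
    rwa [hsum] at hhs
  · have hrw : v - (v - (2:ℝ) • X) = (2:ℝ) • X := by abel
    rw [hrw, norm_smul, Real.norm_eq_abs]
    have h1 : ‖X‖ < ε/2 := lt_of_lt_of_le hk (min_le_left _ _)
    have h2 : |(2:ℝ)| = 2 := by norm_num
    rw [h2]
    linarith
end

section
/- Let {Λ_i}_{i∈ℕ} be a countable system of closed cones in ℝⁿ satisfying the normal qualification condition. Then for every x* ∈ N̂(0; ⋂_{i=1}^∞ Λ_i) with ⟨x*,x⟩ < 0 for all x ∈ ⋂_{i=1}^∞ Λ_i \ {0}, there exist x*_i ∈ N(0;Λ_i) such that x* = Σ_{i=1}^∞ 2^{-i} x*_i. -/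
open Filter Topology

variable {E : Type*} [NormedAddCommGroup E] [InnerProductSpace ℝ E]

/-! ### Auxiliary lemmas -/

open Metric in
/-- Nearest points of closed sets give (scaled) Fréchet normals. -/
lemma isEpsNormal_of_nearest {Λ : Set E} {p q : E}
    (hmin : ∀ z ∈ Λ, ‖p - q‖ ≤ ‖p - z‖) {c : ℝ} (hc : 0 ≤ c) :
    IsEpsNormal 0 (c • (p - q)) Λ q := by
  intro η hη
  have hcc : (0:ℝ) < c + 1 := by linarith
  refine ⟨2 * η / (c + 1), by positivity, fun z hz hzq => ?_⟩
  have key : (inner ℝ (p - q) (z - q) : ℝ) ≤ ‖z - q‖ ^ 2 / 2 := by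
    have h1 : ‖p - q‖ ^ 2 ≤ ‖p - z‖ ^ 2 :=
      pow_le_pow_left₀ (norm_nonneg _) (hmin z hz) 2
    have h2 : p - z = (p - q) - (z - q) := by abel
    have expand : ‖(p - q) - (z - q)‖ ^ 2
        = ‖p - q‖ ^ 2 - 2 * inner ℝ (p - q) (z - q) + ‖z - q‖ ^ 2 :=
      norm_sub_sq_real _ _
    rw [h2, expand] at h1
    linarith
  have h3 : (inner ℝ (c • (p - q)) (z - q) : ℝ) = c * inner ℝ (p - q) (z - q) :=
    real_inner_smul_left _ _ _
  have hn : (0:ℝ) ≤ ‖z - q‖ := norm_nonneg _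
  rw [h3, zero_add]
  have h5a : c * ‖z - q‖ ≤ 2 * η := by
    have h1' : c * ‖z - q‖ ≤ c * (2 * η / (c + 1)) := mul_le_mul_of_nonneg_left hzq.le hc
    have h2' : c * (2 * η / (c + 1)) ≤ 2 * η := by
      rw [mul_div_assoc', div_le_iff₀ hcc]; nlinarith
    linarith
  have h4 : c * (inner ℝ (p - q) (z - q) : ℝ) ≤ c * (‖z - q‖ ^ 2 / 2) :=
    mul_le_mul_of_nonneg_left key hc
  have h6 := mul_le_mul_of_nonneg_right h5a hn
  nlinarith

open Metric in
/-- The distance to a cone is positively homogeneous. -/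
lemma infDist_smul_cone {Λ : Set E} (hcone : IsConeSet Λ) (h0 : (0:E) ∈ Λ)
    {t : ℝ} (ht : 0 ≤ t) (x : E) : infDist (t • x) Λ = t * infDist x Λ := by
  have hne : Λ.Nonempty := ⟨0, h0⟩
  have one : ∀ (u : ℝ), 0 < u → ∀ y : E, infDist (u • y) Λ ≤ u * infDist y Λ := by
    intro u hu y
    refine le_of_forall_pos_le_add (fun ε hε => ?_)
    obtain ⟨z, hzΛ, hz⟩ := (infDist_lt_iff hne).mp
      (lt_add_of_pos_right (infDist y Λ) (show (0:ℝ) < ε / u by positivity))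
    calc infDist (u • y) Λ ≤ dist (u • y) (u • z) :=
          infDist_le_dist_of_mem (hcone u hu.le z hzΛ)
      _ = u * dist y z := by
          rw [dist_eq_norm, ← smul_sub, norm_smul, Real.norm_of_nonneg hu.le, ← dist_eq_norm]
      _ ≤ u * (infDist y Λ + ε / u) := mul_le_mul_of_nonneg_left hz.le hu.le
      _ = u * infDist y Λ + ε := by rw [mul_add, mul_div_cancel₀ _ (ne_of_gt hu)]
  rcases ht.eq_or_lt with h | h
  · simp [← h, infDist_zero_of_mem h0]
  · refine le_antisymm (one t h x) ?_
    have h2 := one t⁻¹ (inv_pos.mpr h) (t • x)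
    rw [inv_smul_smul₀ (ne_of_gt h)] at h2
    have h3 := mul_le_mul_of_nonneg_left h2 ht
    rw [← mul_assoc, mul_inv_cancel₀ (ne_of_gt h), one_mul] at h3
    exact h3

noncomputable def lamw : ℕ → ℝ := fun i => (1 / 2 ^ (i + 1) : ℝ)

lemma lamw_pos (i : ℕ) : 0 < lamw i := by unfold lamw; positivity

lemma lamw_hasSum : HasSum lamw 1 := by
  have h := hasSum_geometric_of_lt_one (r := (1/2 : ℝ)) (by norm_num) (by norm_num)
  have h2 := h.mul_left (1/2 : ℝ)
  have heq : (fun i => (1/2 : ℝ) * (1/2) ^ i) = lamw := by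
    funext i
    unfold lamw
    rw [pow_succ, one_div, one_div, inv_pow]
    ring
  rw [heq] at h2
  have : (1/2 : ℝ) * (1 - 1/2)⁻¹ = 1 := by norm_num
  rwa [this] at h2

open Metric in
noncomputable def g2fun (Λ : ℕ → Set E) (x : E) : ℝ :=
  ∑' i, lamw i * (infDist x (Λ i)) ^ 2

section g2

open Metric

variable {Λ : ℕ → Set E}

lemma g2_summable (h0 : ∀ i, (0:E) ∈ Λ i) (x : E) :
    Summable (fun i => lamw i * (infDist x (Λ i)) ^ 2) := by
  apply Summable.of_nonneg_of_le
    (fun i => mul_nonneg (lamw_pos i).le (pow_nonneg Metric.infDist_nonneg 2))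
    (fun i => ?_) (lamw_hasSum.summable.mul_right (‖x‖^2))
  have hD : infDist x (Λ i) ≤ ‖x‖ := by
    simpa [dist_zero_right] using infDist_le_dist_of_mem (h0 i)
  exact mul_le_mul_of_nonneg_left
    (pow_le_pow_left₀ infDist_nonneg hD 2) (lamw_pos i).le

lemma g2_nonneg (x : E) : 0 ≤ g2fun Λ x :=
  tsum_nonneg (fun i => mul_nonneg (lamw_pos i).le (pow_nonneg Metric.infDist_nonneg 2))

lemma g2_zero (h0 : ∀ i, (0:E) ∈ Λ i) : g2fun Λ (0:E) = 0 := by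
  unfold g2fun
  have : ∀ i, lamw i * (infDist (0:E) (Λ i)) ^ 2 = 0 := by
    intro i; rw [infDist_zero_of_mem (h0 i)]; ring
  simp [this]

lemma g2_homog (hcone : ∀ i, IsConeSet (Λ i)) (h0 : ∀ i, (0:E) ∈ Λ i)
    {t : ℝ} (ht : 0 ≤ t) (x : E) : g2fun Λ (t • x) = t ^ 2 * g2fun Λ x := by
  unfold g2fun
  rw [← tsum_mul_left]
  apply tsum_congr
  intro i
  rw [infDist_smul_cone (hcone i) (h0 i) ht]
  ring

lemma g2_continuousOn (h0 : ∀ i, (0:E) ∈ Λ i) :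
    ContinuousOn (g2fun Λ) (closedBall (0:E) 1) := by
  apply continuousOn_tsum (u := lamw)
    (fun i => ((continuous_const.mul ((continuous_infDist_pt (Λ i)).pow 2)).continuousOn))
    lamw_hasSum.summable
  intro i x hx
  rw [mem_closedBall_zero_iff] at hx
  have hD : infDist x (Λ i) ≤ ‖x‖ := by
    simpa [dist_zero_right] using infDist_le_dist_of_mem (h0 i)
  have h1 : infDist x (Λ i) ^ 2 ≤ 1 := by
    have := pow_le_pow_left₀ infDist_nonneg (hD.trans hx) 2
    simpa using this
  simp only [Pi.mul_apply, Pi.pow_apply]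
  rw [Real.norm_eq_abs,
    abs_of_nonneg (mul_nonneg (lamw_pos i).le (pow_nonneg infDist_nonneg 2))]
  nlinarith [lamw_pos i]

lemma g2_eq_zero_mem (hclosed : ∀ i, IsClosed (Λ i)) (h0 : ∀ i, (0:E) ∈ Λ i)
    {x : E} (hx : g2fun Λ x = 0) (i : ℕ) : x ∈ Λ i := by
  have hterm : lamw i * (infDist x (Λ i)) ^ 2 ≤ g2fun Λ x :=
    Summable.le_tsum (g2_summable h0 x) i
      (fun j _ => mul_nonneg (lamw_pos j).le (pow_nonneg infDist_nonneg 2))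
  rw [hx] at hterm
  have h1 : lamw i * (infDist x (Λ i)) ^ 2 = 0 :=
    le_antisymm hterm (mul_nonneg (lamw_pos i).le (pow_nonneg infDist_nonneg 2))
  have h2 : infDist x (Λ i) = 0 := by
    rcases mul_eq_zero.mp h1 with h | h
    · exact absurd h (lamw_pos i).ne'
    · exact pow_eq_zero_iff (by norm_num) |>.mp h
  exact ((hclosed i).mem_iff_infDist_zero ⟨0, h0 i⟩).mpr h2

end g2

lemma sqrt_pow_nat {a : ℝ} (ha : 0 ≤ a) (n : ℕ) :
    Real.sqrt (a ^ n) = (Real.sqrt a) ^ n := by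
  induction n with
  | zero => simp
  | succ k ih => rw [pow_succ, pow_succ, Real.sqrt_mul (pow_nonneg ha k), ih]

set_option maxHeartbeats 2000000 in
open Metric in
/-- The key variational step: for each large `ρ`, an exact convex-combination
representation of `v` by scaled proximal normals at points near the origin. -/
lemma key_step [ProperSpace E] {Λ : ℕ → Set E}
    (hcone : ∀ i, IsConeSet (Λ i)) (hclosed : ∀ i, IsClosed (Λ i))
    (h0 : ∀ i, (0:E) ∈ Λ i) {v : E} (hv0 : v ≠ 0) {m2 : ℝ} (hm2 : 0 < m2)
    (FactH : ∀ x : E, 0 ≤ (inner ℝ v x : ℝ) → m2 * ‖x‖ ^ 2 ≤ g2fun Λ x)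
    {ρ : ℝ} (hρ : ‖v‖ / m2 < ρ) :
    ∃ (y z : ℕ → E), (∀ i, z i ∈ Λ i) ∧
      (∀ i, ‖z i‖ ≤ 2 * ‖v‖ / (m2 * ρ)) ∧
      (∀ i, IsEpsNormal 0 (y i) (Λ i) (z i)) ∧
      (∀ i, ‖y i‖ ^ 2 ≤ 4 * (‖v‖ ^ 2 / m2) * 2 ^ (i + 1)) ∧
      HasSum (fun i => lamw i • y i) v := by
  have hvpos : (0:ℝ) < ‖v‖ := norm_pos_iff.mpr hv0
  have hρpos : (0:ℝ) < ρ := (div_pos hvpos hm2).trans hρ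
  -- minimize φ over the closed unit ball
  set φ : E → ℝ := fun x => -(inner ℝ v x : ℝ) + ρ * g2fun Λ x with hφdef
  have hφcont : ContinuousOn φ (closedBall (0:E) 1) :=
    ((continuous_const.inner continuous_id).neg.continuousOn).add
      (continuousOn_const.mul (g2_continuousOn h0))
  obtain ⟨xb, hxbmem, hxbmin⟩ := (isCompact_closedBall (0:E) 1).exists_isMinOn
    ⟨0, mem_closedBall_self zero_le_one⟩ hφcont
  have hφ0 : φ 0 = 0 := by
    simp [hφdef, g2_zero h0]
  have hφxb : φ xb ≤ 0 := by
    have := isMinOn_iff.mp hxbmin 0 (mem_closedBall_self (zero_le_one : (0:ℝ) ≤ 1))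
    rwa [hφ0] at this
  have h1 : ρ * g2fun Λ xb ≤ (inner ℝ v xb : ℝ) := by
    have : -(inner ℝ v xb : ℝ) + ρ * g2fun Λ xb ≤ 0 := hφxb
    linarith
  have hg2nn : 0 ≤ g2fun Λ xb := g2_nonneg xb
  have h2 : 0 ≤ (inner ℝ v xb : ℝ) :=
    le_trans (mul_nonneg hρpos.le hg2nn) h1
  have h4 : (inner ℝ v xb : ℝ) ≤ ‖v‖ * ‖xb‖ := real_inner_le_norm v xb
  have h5 : m2 * ‖xb‖ ^ 2 ≤ g2fun Λ xb := FactH xb h2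
  -- norm bound on the minimizer
  have hxbnorm' : ‖xb‖ * (m2 * ρ) ≤ ‖v‖ := by
    rcases eq_or_lt_of_le (norm_nonneg xb) with hx0 | hx0
    · rw [← hx0, zero_mul]; exact norm_nonneg v
    · nlinarith [mul_le_mul_of_nonneg_left h5 hρpos.le]
  have hm2ρ : (0:ℝ) < m2 * ρ := mul_pos hm2 hρpos
  have hxbnorm : ‖xb‖ ≤ ‖v‖ / (m2 * ρ) := (le_div_iff₀ hm2ρ).mpr hxbnorm'
  have hxblt : ‖xb‖ < 1 := by
    have hlt : ‖v‖ / (m2 * ρ) < 1 := by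
      rw [div_lt_one hm2ρ]
      rw [div_lt_iff₀ hm2] at hρ
      linarith
    linarith
  -- bound on g2 at the minimizer
  have hb1 : ρ * g2fun Λ xb ≤ ‖v‖ * ‖xb‖ := h1.trans h4
  have hg2xb' : m2 * (ρ ^ 2 * g2fun Λ xb) ≤ ‖v‖ ^ 2 := by
    have e1 : m2 * ρ * (ρ * g2fun Λ xb) ≤ m2 * ρ * (‖v‖ * ‖xb‖) :=
      mul_le_mul_of_nonneg_left hb1 hm2ρ.le
    have e2 : ‖v‖ * (‖xb‖ * (m2 * ρ)) ≤ ‖v‖ * ‖v‖ :=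
      mul_le_mul_of_nonneg_left hxbnorm' hvpos.le
    nlinarith [e1, e2]
  have hρ2g2 : ρ ^ 2 * g2fun Λ xb ≤ ‖v‖ ^ 2 / m2 :=
    (le_div_iff₀ hm2).mpr (by linarith [hg2xb'])
  -- nearest points
  have hzex : ∀ i, ∃ z ∈ Λ i, infDist xb (Λ i) = dist xb z :=
    fun i => (hclosed i).exists_infDist_eq_dist ⟨0, h0 i⟩ xb
  choose z hzmem hzdist using hzex
  have hznear : ∀ i, ∀ u ∈ Λ i, ‖xb - z i‖ ≤ ‖xb - u‖ := by
    intro i u hu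
    rw [← dist_eq_norm, ← dist_eq_norm, ← hzdist i]
    exact infDist_le_dist_of_mem hu
  have hxb_le : ∀ i, ‖xb - z i‖ ≤ ‖xb‖ := by
    intro i
    have := hznear i 0 (h0 i)
    simpa using this
  have hznorm : ∀ i, ‖z i‖ ≤ 2 * ‖v‖ / (m2 * ρ) := by
    intro i
    have h6 : ‖z i‖ ≤ ‖xb‖ + ‖xb - z i‖ := by
      have h6a : ‖xb - (xb - z i)‖ ≤ ‖xb‖ + ‖xb - z i‖ := norm_sub_le _ _
      rwa [sub_sub_cancel] at h6a
    have : ‖z i‖ ≤ 2 * ‖xb‖ := by linarith [hxb_le i]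
    have h7 : 2 * ‖xb‖ ≤ 2 * (‖v‖ / (m2 * ρ)) := by linarith
    rw [mul_div_assoc]
    linarith
  -- the normal vectors
  set y : ℕ → E := fun i => (2 * ρ) • (xb - z i) with hydef
  have hynormal : ∀ i, IsEpsNormal 0 (y i) (Λ i) (z i) :=
    fun i => isEpsNormal_of_nearest (hznear i) (by positivity)
  have hDz : ∀ i, infDist xb (Λ i) = ‖xb - z i‖ := by
    intro i; rw [hzdist i, dist_eq_norm]
  have hybound : ∀ i, ‖y i‖ ^ 2 ≤ 4 * (‖v‖ ^ 2 / m2) * 2 ^ (i + 1) := by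
    intro i
    have hterm : lamw i * (infDist xb (Λ i)) ^ 2 ≤ g2fun Λ xb :=
      Summable.le_tsum (g2_summable h0 xb) i
        (fun j _ => mul_nonneg (lamw_pos j).le (pow_nonneg infDist_nonneg 2))
    have hterm' : (infDist xb (Λ i)) ^ 2 / 2 ^ (i + 1) ≤ g2fun Λ xb := by
      rw [div_eq_inv_mul, ← one_div]
      exact hterm
    rw [div_le_iff₀ (by positivity : (0:ℝ) < 2 ^ (i + 1))] at hterm'
    have hyn : ‖y i‖ = (2 * ρ) * ‖xb - z i‖ := by
      rw [hydef]
      simp only [norm_smul, Real.norm_eq_abs, abs_of_pos (by positivity : (0:ℝ) < 2 * ρ)]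
    rw [hyn, mul_pow, ← hDz i]
    have k1 : ρ ^ 2 * (infDist xb (Λ i)) ^ 2
        ≤ ρ ^ 2 * (g2fun Λ xb * 2 ^ (i + 1)) :=
      mul_le_mul_of_nonneg_left hterm' (sq_nonneg ρ)
    have k2 : (ρ ^ 2 * g2fun Λ xb) * 2 ^ (i + 1) ≤ (‖v‖ ^ 2 / m2) * 2 ^ (i + 1) :=
      mul_le_mul_of_nonneg_right hρ2g2 (by positivity)
    nlinarith [k1, k2]
  -- summability around the nearest points
  have hzsummand : ∀ i, ‖lamw i • z i‖ ≤ lamw i * (2 * ‖v‖ / (m2 * ρ)) := by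
    intro i
    rw [norm_smul, Real.norm_eq_abs, abs_of_pos (lamw_pos i)]
    exact mul_le_mul_of_nonneg_left (hznorm i) (lamw_pos i).le
  have hst : Summable (fun i => lamw i • z i) :=
    Summable.of_norm_bounded (lamw_hasSum.summable.mul_right _) hzsummand
  set s := ∑' i, lamw i • z i with hsdef
  have hs : HasSum (fun i => lamw i • z i) s := hst.hasSum
  have hccsummand : ∀ i, lamw i * ‖z i‖ ^ 2 ≤ lamw i * (2 * ‖v‖ / (m2 * ρ)) ^ 2 := by
    intro i
    exact mul_le_mul_of_nonneg_left
      (pow_le_pow_left₀ (norm_nonneg _) (hznorm i) 2) (lamw_pos i).le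
  have hccsm : Summable (fun i => lamw i * ‖z i‖ ^ 2) :=
    Summable.of_nonneg_of_le
      (fun i => mul_nonneg (lamw_pos i).le (pow_nonneg (norm_nonneg _) 2))
      hccsummand (lamw_hasSum.summable.mul_right _)
  set cc := ∑' i, lamw i * ‖z i‖ ^ 2 with hccdef
  -- the quadratic majorant
  have hQT : ∀ x : E, HasSum (fun i => lamw i * ‖x - z i‖ ^ 2)
      (‖x‖ ^ 2 - 2 * (inner ℝ x s : ℝ) + cc) := by
    intro x
    have hpt : ∀ i, lamw i * ‖x - z i‖ ^ 2
        = lamw i * ‖x‖ ^ 2 - 2 * (inner ℝ x (lamw i • z i) : ℝ) + lamw i * ‖z i‖ ^ 2 := by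
      intro i
      rw [norm_sub_sq_real, real_inner_smul_right]
      ring
    have hA : HasSum (fun i => lamw i * ‖x‖ ^ 2) (1 * ‖x‖ ^ 2) :=
      lamw_hasSum.mul_right _
    have hB : HasSum (fun i => (inner ℝ x (lamw i • z i) : ℝ)) (inner ℝ x s) :=
      (innerSL ℝ x).hasSum hs
    have hC : HasSum (fun i => lamw i * ‖z i‖ ^ 2) cc := hccsm.hasSum
    have hcomb := (hA.sub (hB.mul_left 2)).add hC
    rw [one_mul] at hcomb
    have heq : (fun i => lamw i * ‖x - z i‖ ^ 2)
        = fun i => lamw i * ‖x‖ ^ 2 - 2 * (inner ℝ x (lamw i • z i) : ℝ)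
          + lamw i * ‖z i‖ ^ 2 := funext hpt
    rw [heq]
    exact hcomb
  have hφle : ∀ x : E, φ x ≤ -(inner ℝ v x : ℝ) + ρ * (‖x‖ ^ 2 - 2 * (inner ℝ x s : ℝ) + cc) := by
    intro x
    have hg2le : g2fun Λ x ≤ ‖x‖ ^ 2 - 2 * (inner ℝ x s : ℝ) + cc := by
      rw [← (hQT x).tsum_eq]
      apply Summable.tsum_le_tsum _ (g2_summable h0 x) (hQT x).summable
      intro i
      have hd : infDist x (Λ i) ≤ ‖x - z i‖ := by
        rw [← dist_eq_norm]
        exact infDist_le_dist_of_mem (hzmem i)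
      exact mul_le_mul_of_nonneg_left
        (pow_le_pow_left₀ infDist_nonneg hd 2) (lamw_pos i).le
    have := mul_le_mul_of_nonneg_left hg2le hρpos.le
    simp only [hφdef]
    linarith
  have hφeq : φ xb = -(inner ℝ v xb : ℝ) + ρ * (‖xb‖ ^ 2 - 2 * (inner ℝ xb s : ℝ) + cc) := by
    have hg2eq : g2fun Λ xb = ‖xb‖ ^ 2 - 2 * (inner ℝ xb s : ℝ) + cc := by
      rw [← (hQT xb).tsum_eq]
      unfold g2fun
      exact tsum_congr (fun i => by rw [hDz i])
    simp only [hφdef]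
    rw [hg2eq]
  -- first-order condition
  set w : E := (2 * ρ) • (xb - s) - v with hwdef
  have hweq : w = 0 := by
    by_contra hw0
    have hwpos : (0:ℝ) < ‖w‖ := norm_pos_iff.mpr hw0
    set t : ℝ := min ((1 - ‖xb‖) / ‖w‖) (1 / (2 * ρ)) with htdef
    have ht : (0:ℝ) < t := lt_min (div_pos (by linarith) hwpos) (by positivity)
    have htρ : ρ * t ≤ 1 / 2 := by
      have h7 : t ≤ 1 / (2 * ρ) := min_le_right _ _
      have h8 : ρ * t ≤ ρ * (1 / (2 * ρ)) := mul_le_mul_of_nonneg_left h7 hρpos.le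
      have h9 : ρ * (1 / (2 * ρ)) = 1 / 2 := by
        field_simp
      linarith
    set x' : E := xb - t • w with hx'def
    have hx'mem : x' ∈ closedBall (0:E) 1 := by
      rw [mem_closedBall_zero_iff]
      have h10 : ‖x'‖ ≤ ‖xb‖ + ‖t • w‖ := norm_sub_le _ _
      have h11 : ‖t • w‖ = t * ‖w‖ := by
        rw [norm_smul, Real.norm_eq_abs, abs_of_pos ht]
      have h12 : t * ‖w‖ ≤ ((1 - ‖xb‖) / ‖w‖) * ‖w‖ :=
        mul_le_mul_of_nonneg_right (min_le_left _ _) (norm_nonneg w)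
      rw [div_mul_cancel₀ _ (ne_of_gt hwpos)] at h12
      rw [h11] at h10
      linarith
    have hQle : -(inner ℝ v xb : ℝ) + ρ * (‖xb‖ ^ 2 - 2 * (inner ℝ xb s : ℝ) + cc)
        ≤ -(inner ℝ v x' : ℝ) + ρ * (‖x'‖ ^ 2 - 2 * (inner ℝ x' s : ℝ) + cc) := by
      have hmin' : φ xb ≤ φ x' := hxbmin hx'mem
      have := hφle x'
      linarith [hφeq]
    have e1 : (inner ℝ v x' : ℝ) = inner ℝ v xb - t * inner ℝ v w := by
      rw [hx'def, inner_sub_right, real_inner_smul_right]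
    have e2 : ‖x'‖ ^ 2 = ‖xb‖ ^ 2 - 2 * (t * (inner ℝ xb w : ℝ)) + t ^ 2 * ‖w‖ ^ 2 := by
      rw [hx'def, norm_sub_sq_real, real_inner_smul_right, norm_smul,
        Real.norm_eq_abs, mul_pow, sq_abs]
    have e3 : (inner ℝ x' s : ℝ) = inner ℝ xb s - t * inner ℝ w s := by
      rw [hx'def, inner_sub_left, real_inner_smul_left]
    have e4 : ‖w‖ ^ 2 = 2 * ρ * ((inner ℝ xb w : ℝ) - inner ℝ s w) - inner ℝ v w := by
      rw [← real_inner_self_eq_norm_sq]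
      nth_rewrite 1 [hwdef]
      rw [inner_sub_left, real_inner_smul_left, inner_sub_left]
    have hsym : (inner ℝ w s : ℝ) = inner ℝ s w := real_inner_comm _ _
    rw [e1, e2, e3] at hQle
    have hw2 : (0:ℝ) < ‖w‖ ^ 2 := pow_pos hwpos 2
    have hpn : (0:ℝ) ≤ t * ‖w‖ ^ 2 := by positivity
    have hkey2 : ρ * t * (t * ‖w‖ ^ 2) ≤ (1 / 2) * (t * ‖w‖ ^ 2) :=
      mul_le_mul_of_nonneg_right htρ hpn
    have hlin : 0 ≤ t * (inner ℝ v w : ℝ) - 2 * ρ * t * (inner ℝ xb w : ℝ)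
        + ρ * t ^ 2 * ‖w‖ ^ 2 + 2 * ρ * t * (inner ℝ w s : ℝ) := by
      nlinarith [hQle]
    have e5 : t * ‖w‖ ^ 2 = 2 * ρ * t * (inner ℝ xb w : ℝ)
        - 2 * ρ * t * (inner ℝ w s : ℝ) - t * (inner ℝ v w : ℝ) := by
      rw [e4, ← hsym]
      ring
    have hfin : 0 ≤ ρ * t ^ 2 * ‖w‖ ^ 2 - t * ‖w‖ ^ 2 := by linarith [hlin, e5]
    have hrt : ρ * t ^ 2 * ‖w‖ ^ 2 = ρ * t * (t * ‖w‖ ^ 2) := by ring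
    rw [hrt] at hfin
    have hpos2 : (0:ℝ) < t * ‖w‖ ^ 2 := mul_pos ht hw2
    linarith [hkey2, hfin, hpos2]
  have hvs : (2 * ρ) • (xb - s) = v := by
    have := sub_eq_zero.mp hweq
    exact this
  refine ⟨y, z, hzmem, hznorm, hynormal, hybound, ?_⟩
  have hA2 : HasSum (fun i => lamw i • xb) xb := by
    simpa using lamw_hasSum.smul_const xb
  have hsum0 : HasSum (fun i => lamw i • xb - lamw i • z i) (xb - s) := hA2.sub hs
  have hsum1 := hsum0.const_smul (2 * ρ)
  have heq2 : (fun i => lamw i • y i)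
      = fun i => (2 * ρ) • (lamw i • xb - lamw i • z i) := by
    funext i
    rw [hydef]
    rw [smul_comm, smul_sub]
  rw [heq2, ← hvs]
  exact hsum1



lemma isEpsNormal_zero (Ω : Set E) (x₀ : E) : IsEpsNormal 0 (0:E) Ω x₀ := by
  intro η hη
  refine ⟨1, one_pos, fun x hx hlt => ?_⟩
  rw [inner_zero_left, zero_add]
  positivity

lemma zero_mem_limitingNormalCone {Ω : Set E} {x₀ : E} (h : x₀ ∈ Ω) :
    (0:E) ∈ limitingNormalCone Ω x₀ :=
  ⟨fun _ => 0, fun _ => x₀, fun _ => 0, fun _ => le_refl 0, tendsto_const_nhds,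
    fun _ => h, tendsto_const_nhds, tendsto_const_nhds,
    fun _ => isEpsNormal_zero Ω x₀⟩

/-- refined representation of Fréchet normals to countable
intersections of cones. -/
theorem refined_representation (n : ℕ) (Λ : ℕ → Set (EuclideanSpace ℝ (Fin n)))
    (hcone : ∀ i, IsConeSet (Λ i)) (hclosed : ∀ i, IsClosed (Λ i))
    (h0 : ∀ i, (0 : EuclideanSpace ℝ (Fin n)) ∈ Λ i)
    (hqc : NormalQualification n Λ)
    (v : EuclideanSpace ℝ (Fin n)) (hv : v ∈ frechetNormalCone (⋂ i, Λ i) 0)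
    (hneg : ∀ x ∈ (⋂ i, Λ i) \ {0}, (inner ℝ v x : ℝ) < 0) :
    ∃ x : ℕ → EuclideanSpace ℝ (Fin n),
      (∀ i, x i ∈ limitingNormalCone (Λ i) 0) ∧
      HasSum (fun i => (1 / 2 ^ (i + 1) : ℝ) • x i) v := by
  classical
  by_cases hv0 : v = 0
  · refine ⟨fun _ => 0, fun i => zero_mem_limitingNormalCone (h0 i), ?_⟩
    rw [hv0]
    simpa using (hasSum_zero : HasSum (fun _ : ℕ => (0 : EuclideanSpace ℝ (Fin n))) 0)
  have hvpos : (0:ℝ) < ‖v‖ := norm_pos_iff.mpr hv0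
  -- the compact set of unit vectors with nonnegative inner ℝ product against v
  set K : Set (EuclideanSpace ℝ (Fin n)) := {x | ‖x‖ = 1 ∧ 0 ≤ (inner ℝ v x : ℝ)} with hK
  have hKclosed : IsClosed K := by
    rw [hK, Set.setOf_and]
    exact (isClosed_eq continuous_norm continuous_const).inter
      (isClosed_le continuous_const (continuous_const.inner continuous_id))
  have hKsub : K ⊆ Metric.closedBall 0 1 :=
    fun x hx => mem_closedBall_zero_iff.mpr (le_of_eq hx.1)
  have hKc : IsCompact K :=
    (isCompact_closedBall (0 : EuclideanSpace ℝ (Fin n)) 1).of_isClosed_subset hKclosed hKsub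
  have hKne : K.Nonempty := by
    refine ⟨‖v‖⁻¹ • v, ?_, ?_⟩
    · rw [norm_smul, Real.norm_eq_abs, abs_of_pos (inv_pos.mpr hvpos),
        inv_mul_cancel₀ hvpos.ne']
    · rw [real_inner_smul_right]
      exact mul_nonneg (inv_nonneg.mpr (norm_nonneg v)) real_inner_self_nonneg
  obtain ⟨x₀, hx₀K, hx₀min⟩ := hKc.exists_isMinOn hKne ((g2_continuousOn h0).mono hKsub)
  set m2 : ℝ := g2fun Λ x₀ with hm2def
  have hm2 : 0 < m2 := by
    rcases (g2_nonneg x₀ : 0 ≤ m2).lt_or_eq with h | h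
    · exact h
    · exfalso
      have hx₀mem : x₀ ∈ (⋂ i, Λ i) :=
        Set.mem_iInter.mpr (g2_eq_zero_mem hclosed h0 h.symm)
      have hx₀ne : x₀ ≠ 0 := by
        intro hcontra
        rw [hcontra] at hx₀K
        simpa using hx₀K.1
      have := hneg x₀ ⟨hx₀mem, by simpa using hx₀ne⟩
      linarith [hx₀K.2]
  have FactH : ∀ x : EuclideanSpace ℝ (Fin n),
      0 ≤ (inner ℝ v x : ℝ) → m2 * ‖x‖ ^ 2 ≤ g2fun Λ x := by
    intro x hx
    by_cases hx0 : x = 0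
    · rw [hx0, g2_zero h0]
      simp
    · have hxn : (0:ℝ) < ‖x‖ := norm_pos_iff.mpr hx0
      have hu : (‖x‖⁻¹ • x) ∈ K := by
        constructor
        · rw [norm_smul, Real.norm_eq_abs, abs_of_pos (inv_pos.mpr hxn),
            inv_mul_cancel₀ hxn.ne']
        · rw [real_inner_smul_right]
          exact mul_nonneg (inv_nonneg.mpr (norm_nonneg x)) hx
      have hmin := isMinOn_iff.mp hx₀min _ hu
      rw [g2_homog hcone h0 (inv_nonneg.mpr (norm_nonneg x))] at hmin
      have hx2 : (0:ℝ) < ‖x‖ ^ 2 := pow_pos hxn 2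
      calc m2 * ‖x‖ ^ 2 ≤ ((‖x‖⁻¹) ^ 2 * g2fun Λ x) * ‖x‖ ^ 2 :=
            mul_le_mul_of_nonneg_right hmin hx2.le
        _ = g2fun Λ x := by
            field_simp
  -- a sequence of penalization parameters
  set c : ℝ := ‖v‖ / m2 with hc
  have hcpos : 0 < c := div_pos hvpos hm2
  set ρs : ℕ → ℝ := fun k => c + k + 1 with hρs
  have hρlt : ∀ k, c < ρs k := by
    intro k
    have : (0:ℝ) ≤ (k:ℝ) := Nat.cast_nonneg k
    simp only [hρs]
    linarith
  choose y z hzmem hznorm hynormal hybound hysum using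
    fun k => key_step hcone hclosed h0 hv0 hm2 FactH (hρlt k)
  -- extraction of a pointwise convergent subsequence
  set R : ℕ → ℝ := fun i => Real.sqrt (4 * (‖v‖ ^ 2 / m2) * 2 ^ (i + 1)) with hR
  have hynorm : ∀ k i, ‖y k i‖ ≤ R i := by
    intro k i
    rw [hR]
    rw [show ‖y k i‖ = Real.sqrt (‖y k i‖ ^ 2) by rw [Real.sqrt_sq (norm_nonneg _)]]
    exact Real.sqrt_le_sqrt (hybound k i)
  have hyR : ∀ k, y k ∈ Set.univ.pi (fun i => Metric.closedBall (0 : EuclideanSpace ℝ (Fin n)) (R i)) := by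
    intro k
    rw [Set.mem_univ_pi]
    intro i
    rw [mem_closedBall_zero_iff]
    exact hynorm k i
  have hScomp : IsCompact (Set.univ.pi fun i => Metric.closedBall (0 : EuclideanSpace ℝ (Fin n)) (R i)) :=
    isCompact_univ_pi (fun i => isCompact_closedBall _ _)
  obtain ⟨xl, hxlS, ψ, hψ, hconv⟩ := hScomp.tendsto_subseq hyR
  have hcoord : ∀ i, Tendsto (fun k => y (ψ k) i) atTop (𝓝 (xl i)) :=
    fun i => tendsto_pi_nhds.mp hconv i
  have hxlnorm : ∀ i, ‖xl i‖ ≤ R i := by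
    intro i
    have := (Set.mem_univ_pi.mp hxlS) i
    rwa [mem_closedBall_zero_iff] at this
  -- the z's tend to the origin
  have hztend : ∀ i, Tendsto (fun k => z (ψ k) i) atTop (𝓝 0) := by
    intro i
    apply squeeze_zero_norm (fun k => hznorm (ψ k) i)
    apply Tendsto.div_atTop (tendsto_const_nhds (x := 2 * ‖v‖))
    apply Tendsto.const_mul_atTop hm2
    have h1 : Tendsto (fun k => (ψ k : ℝ)) atTop atTop :=
      tendsto_natCast_atTop_atTop.comp hψ.tendsto_atTop
    have h2 : (fun k => ρs (ψ k)) = fun k => ((ψ k : ℝ)) + (c + 1) := by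
      funext k
      simp only [hρs]
      ring
    rw [h2]
    exact tendsto_atTop_add_const_right _ _ h1
  refine ⟨xl, fun i => ?_, ?_⟩
  · exact ⟨fun _ => 0, fun k => z (ψ k) i, fun k => y (ψ k) i,
      fun _ => le_refl 0, tendsto_const_nhds, fun k => hzmem (ψ k) i, hztend i,
      hcoord i, fun k => hynormal (ψ k) i⟩
  -- summable bound
  have hlamR : ∀ i, lamw i * R i
      = Real.sqrt (4 * (‖v‖ ^ 2 / m2)) * (Real.sqrt (1/2)) ^ (i + 1) := by
    intro i
    have h4c2 : (0:ℝ) ≤ 4 * (‖v‖ ^ 2 / m2) := by positivity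
    have hlam2 : (lamw i) ^ 2 * (2:ℝ) ^ (i + 1) = lamw i := by
      unfold lamw
      rw [div_pow, one_pow, ← pow_mul]
      field_simp
      ring
    have hlamsqrt : lamw i = Real.sqrt ((lamw i) ^ 2) :=
      (Real.sqrt_sq (lamw_pos i).le).symm
    rw [hR]
    calc lamw i * Real.sqrt (4 * (‖v‖ ^ 2 / m2) * 2 ^ (i + 1))
        = Real.sqrt ((lamw i) ^ 2) * Real.sqrt (4 * (‖v‖ ^ 2 / m2) * 2 ^ (i + 1)) := by
          rw [← hlamsqrt]
      _ = Real.sqrt ((lamw i) ^ 2 * (4 * (‖v‖ ^ 2 / m2) * 2 ^ (i + 1))) := by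
          rw [← Real.sqrt_mul (sq_nonneg _)]
      _ = Real.sqrt (4 * (‖v‖ ^ 2 / m2) * ((lamw i) ^ 2 * 2 ^ (i + 1))) := by
          ring_nf
      _ = Real.sqrt (4 * (‖v‖ ^ 2 / m2) * lamw i) := by rw [hlam2]
      _ = Real.sqrt (4 * (‖v‖ ^ 2 / m2)) * Real.sqrt (lamw i) := by
          rw [Real.sqrt_mul h4c2]
      _ = Real.sqrt (4 * (‖v‖ ^ 2 / m2)) * (Real.sqrt (1/2)) ^ (i + 1) := by
          congr 1
          rw [show lamw i = ((1:ℝ)/2) ^ (i + 1) by unfold lamw; rw [div_pow, one_pow]]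
          exact sqrt_pow_nat (by norm_num) (i + 1)
  have hrlt : Real.sqrt (1/2) < 1 := by
    have := Real.sqrt_lt_sqrt (by norm_num : (0:ℝ) ≤ 1/2) (by norm_num : (1/2:ℝ) < 1)
    rwa [Real.sqrt_one] at this
  have hb : Summable (fun i => lamw i * R i) := by
    have hs1 : Summable (fun i : ℕ => (Real.sqrt (1/2)) ^ (i + 1)) := by
      apply Summable.congr ((summable_geometric_of_lt_one (Real.sqrt_nonneg _) hrlt).mul_right
        (Real.sqrt (1/2)))
      intro i
      rw [← pow_succ]
    have := hs1.mul_left (Real.sqrt (4 * (‖v‖ ^ 2 / m2)))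
    apply Summable.congr this
    intro i
    rw [hlamR i]
  have hbnd : ∀ k i, ‖lamw i • y (ψ k) i‖ ≤ lamw i * R i := by
    intro k i
    rw [norm_smul, Real.norm_eq_abs, abs_of_pos (lamw_pos i)]
    exact mul_le_mul_of_nonneg_left (hynorm (ψ k) i) (lamw_pos i).le
  have hdc := tendsto_tsum_of_dominated_convergence (𝓕 := atTop) hb
    (fun i => (hcoord i).const_smul (lamw i))
    (Eventually.of_forall (fun k i => hbnd k i))
  have hconstv : (fun k => ∑' i, lamw i • y (ψ k) i) = fun _ : ℕ => v :=
    funext (fun k => (hysum (ψ k)).tsum_eq)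
  have hdc' : Tendsto (fun _ : ℕ => v) atTop (𝓝 (∑' i, lamw i • xl i)) := by
    rwa [hconstv] at hdc
  have htsum : (∑' i, lamw i • xl i) = v :=
    tendsto_nhds_unique hdc' tendsto_const_nhds
  have hsumm : Summable (fun i => lamw i • xl i) := by
    apply Summable.of_norm_bounded hb
    intro i
    rw [norm_smul, Real.norm_eq_abs, abs_of_pos (lamw_pos i)]
    exact mul_le_mul_of_nonneg_left (hxlnorm i) (lamw_pos i).le
  have hfinal := hsumm.hasSum
  rw [htsum] at hfinal
  exact hfinal
end

section
/- Let {Λ_i}_{i∈ℕ} be closed cones in ℝⁿ satisfying the normal qualification condition, and let Λ := ⋂_{i=1}^∞ Λ_i. Then N̂(0;Λ) ⊆ cl { Σ_{i∈I} x*_i : x*_i ∈ N(0;Λ_i), I a finite subset of ℕ }. -/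
set_option maxHeartbeats 1000000

open Metric


open Filter Topology

variable {E : Type*} [NormedAddCommGroup E] [InnerProductSpace ℝ E]

lemma aux_zero_mem_limiting {Ω : Set E} {x₀ : E} (h : x₀ ∈ Ω) :
    (0 : E) ∈ limitingNormalCone Ω x₀ := by
  refine ⟨fun _ => 0, fun _ => x₀, fun _ => 0, fun _ => le_refl 0, tendsto_const_nhds,
    fun _ => h, tendsto_const_nhds, tendsto_const_nhds, fun k η hη => ⟨1, one_pos, ?_⟩⟩
  intro x hx hxn
  rw [inner_zero_left]
  positivity

lemma aux_dilate {Ω : Set E} (hΩ : IsConeSet Ω) {w p : E} {t : ℝ} (ht : 0 < t)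
    (h : IsEpsNormal 0 w Ω p) : IsEpsNormal 0 w Ω (t • p) := by
  intro η hη
  obtain ⟨δ, hδ, hd⟩ := h η hη
  refine ⟨t * δ, by positivity, fun x hx hxn => ?_⟩
  have hz : t⁻¹ • x ∈ Ω := hΩ t⁻¹ (by positivity) x hx
  have hrw : t⁻¹ • x - p = t⁻¹ • (x - t • p) := by
    rw [smul_sub, smul_smul, inv_mul_cancel₀ ht.ne', one_smul]
  have hnrm : ‖t⁻¹ • x - p‖ = t⁻¹ * ‖x - t • p‖ := by
    rw [hrw, norm_smul, Real.norm_eq_abs, abs_of_pos (inv_pos.2 ht)]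
  have h1 : ‖t⁻¹ • x - p‖ < δ := by
    rw [hnrm]
    calc t⁻¹ * ‖x - t • p‖ < t⁻¹ * (t * δ) := by
          exact mul_lt_mul_of_pos_left hxn (inv_pos.2 ht)
      _ = δ := by field_simp
  have h2 := hd _ hz h1
  have key : (inner ℝ w (x - t • p) : ℝ) = t * inner ℝ w (t⁻¹ • x - p) := by
    rw [hrw, real_inner_smul_right, ← mul_assoc, mul_inv_cancel₀ ht.ne', one_mul]
  have hn2 : ‖x - t • p‖ = t * ‖t⁻¹ • x - p‖ := by
    rw [hnrm, ← mul_assoc, mul_inv_cancel₀ ht.ne', one_mul]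
  rw [key, hn2]
  nlinarith [norm_nonneg (t⁻¹ • x - p)]

lemma aux_frechet_mem_limiting {Ω : Set E} (hΩ : IsConeSet Ω) {w p : E} (hp : p ∈ Ω)
    (h : IsEpsNormal 0 w Ω p) : w ∈ limitingNormalCone Ω 0 := by
  refine ⟨fun _ => 0, fun k => ((k : ℝ) + 1)⁻¹ • p, fun _ => w, fun _ => le_refl 0,
    tendsto_const_nhds, fun k => hΩ _ (by positivity) p hp, ?_, tendsto_const_nhds,
    fun k => aux_dilate hΩ (by positivity) h⟩
  have h1 : Tendsto (fun k : ℕ => ((k : ℝ) + 1)⁻¹) atTop (𝓝 0) := by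
    simpa [one_div] using tendsto_one_div_add_atTop_nhds_zero_nat (𝕜 := ℝ)
  simpa using h1.smul_const p

lemma aux_compact_approx {n : ℕ} (Λ : ℕ → Set (EuclideanSpace ℝ (Fin n)))
    (hclosed : ∀ i, IsClosed (Λ i)) (h0 : ∀ i, (0 : EuclideanSpace ℝ (Fin n)) ∈ Λ i)
    {ε : ℝ} (hε : 0 < ε) (R : ℝ) :
    ∃ k : ℕ, ∃ δ : ℝ, 0 < δ ∧ ∀ x : EuclideanSpace ℝ (Fin n), ‖x‖ ≤ R →
      (∀ i < k, infDist x (Λ i) ≤ δ) → infDist x (⋂ i, Λ i) ≤ ε := by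
  by_contra hcon
  push_neg at hcon
  choose x hxR hxd hxε using fun k => hcon k (1 / ((k : ℝ) + 1)) (by positivity)
  have hb : ∀ k, x k ∈ closedBall (0 : EuclideanSpace ℝ (Fin n)) R := fun k => by
    simpa [mem_closedBall, dist_zero_right] using hxR k
  obtain ⟨a, -, ψ, hψ, hlim⟩ := (isCompact_closedBall (0 : EuclideanSpace ℝ (Fin n)) R).tendsto_subseq hb
  have ha : a ∈ ⋂ i, Λ i := by
    refine Set.mem_iInter.2 fun i => ?_
    have hne : (Λ i).Nonempty := ⟨0, h0 i⟩
    have h1 : Tendsto (fun j => infDist (x (ψ j)) (Λ i)) atTop (𝓝 (infDist a (Λ i))) :=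
      ((continuous_infDist_pt (Λ i)).tendsto a).comp hlim
    have h2 : Tendsto (fun j : ℕ => (1 : ℝ) / ((j : ℝ) + 1) + (if j < i + 1 then (R + 1) else 0))
        atTop (𝓝 0) := by
      have : Tendsto (fun j : ℕ => (if j < i + 1 then (R + 1 : ℝ) else 0)) atTop (𝓝 0) := by
        apply Tendsto.congr' _ tendsto_const_nhds
        filter_upwards [eventually_ge_atTop (i + 1)] with j hj
        simp [Nat.not_lt.2 hj]
      simpa using (tendsto_one_div_add_atTop_nhds_zero_nat (𝕜 := ℝ)).add this
    have h3 : infDist a (Λ i) ≤ 0 := by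
      refine le_of_tendsto_of_tendsto' h1 h2 fun j => ?_
      by_cases hji : j < i + 1
      · have hd : infDist (x (ψ j)) (Λ i) ≤ dist (x (ψ j)) 0 := infDist_le_dist_of_mem (h0 i)
        rw [dist_zero_right] at hd
        simp only [if_pos hji]
        have := hxR (ψ j)
        nlinarith [le_of_lt (show (0:ℝ) < 1 / ((j:ℝ)+1) by positivity)]
      · have hik : i < ψ j := lt_of_lt_of_le (Nat.lt_of_lt_of_le (Nat.lt_succ_self i)
          (Nat.not_lt.1 hji)) hψ.le_apply
        have hb1 : infDist (x (ψ j)) (Λ i) ≤ 1 / ((ψ j : ℝ) + 1) := hxd (ψ j) i hik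
        have hb2 : (1 : ℝ) / ((ψ j : ℝ) + 1) ≤ 1 / ((j : ℝ) + 1) := by
          apply one_div_le_one_div_of_le (by positivity)
          have : (j : ℝ) ≤ (ψ j : ℝ) := Nat.cast_le.2 hψ.le_apply
          linarith
        simp only [if_neg hji]
        linarith
    exact ((hclosed i).mem_iff_infDist_zero hne).2 (le_antisymm h3 infDist_nonneg)
  have h4 : Tendsto (fun j => infDist (x (ψ j)) (⋂ i, Λ i)) atTop
      (𝓝 (infDist a (⋂ i, Λ i))) := ((continuous_infDist_pt _).tendsto a).comp hlim
  have h5 : ε ≤ infDist a (⋂ i, Λ i) :=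
    le_of_tendsto_of_tendsto' tendsto_const_nhds h4 fun j => (hxε (ψ j)).le
  rw [infDist_zero_of_mem ha] at h5
  linarith

lemma aux_proj_normal {Ω : Set E} {z q : E} {σ : ℝ} (hσ : 0 < σ)
    (hmin : ∀ x ∈ Ω, ‖z - q‖ ≤ ‖z - x‖) :
    IsEpsNormal 0 (σ⁻¹ • (z - q)) Ω q := by
  intro η hη
  refine ⟨2*σ*η, by positivity, fun x hx hxn => ?_⟩
  have hsplit : z - x = (z - q) - (x - q) := by abel
  have hsq : (inner ℝ (z - q) (x - q) : ℝ) ≤ 1/2 * ‖x - q‖^2 := by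
    have hns := norm_sub_sq_real (z - q) (x - q)
    rw [← hsplit] at hns
    nlinarith [norm_nonneg (z - x), norm_nonneg (z - q), hmin x hx]
  rw [real_inner_smul_left, zero_add]
  have hb : 0 ≤ ‖x - q‖ := norm_nonneg _
  have hσinv : 0 < σ⁻¹ := inv_pos.2 hσ
  have hss : σ * σ⁻¹ = 1 := mul_inv_cancel₀ hσ.ne'
  have hle1 : σ⁻¹ * (inner ℝ (z - q) (x - q) : ℝ) ≤ σ⁻¹ * (1/2 * ‖x - q‖^2) :=
    mul_le_mul_of_nonneg_left hsq hσinv.le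
  have hle2 : σ⁻¹ * (1/2 * ‖x - q‖^2) ≤ η * ‖x - q‖ := by
    have h' : ‖x - q‖^2 ≤ (2*σ*η) * ‖x - q‖ := by
      have := mul_le_mul_of_nonneg_right hxn.le hb
      nlinarith
    calc σ⁻¹ * (1/2 * ‖x - q‖^2) ≤ σ⁻¹ * (1/2 * ((2*σ*η) * ‖x - q‖)) := by
          apply mul_le_mul_of_nonneg_left _ hσinv.le
          linarith
      _ = (σ * σ⁻¹) * (η * ‖x - q‖) := by ring
      _ = η * ‖x - q‖ := by rw [hss, one_mul]
  linarith

/-- closure estimate of the Fréchet normal cone to a countable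
intersection via finite sums of limiting normals. -/
theorem frechet_normal_cone_closure_estimate (n : ℕ)
    (Λ : ℕ → Set (EuclideanSpace ℝ (Fin n)))
    (hcone : ∀ i, IsConeSet (Λ i)) (hclosed : ∀ i, IsClosed (Λ i))
    (h0 : ∀ i, (0 : EuclideanSpace ℝ (Fin n)) ∈ Λ i)
    (hqc : NormalQualification n Λ) :
    frechetNormalCone (⋂ i, Λ i) 0 ⊆
      closure {v | ∃ (I : Finset ℕ) (x : ℕ → EuclideanSpace ℝ (Fin n)),
        (∀ i, x i ∈ limitingNormalCone (Λ i) 0) ∧ v = ∑ i ∈ I, x i} := by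
  classical
  intro v hv
  have hΛc : IsClosed (⋂ i, Λ i) := isClosed_iInter hclosed
  have hΛ0 : (0 : EuclideanSpace ℝ (Fin n)) ∈ ⋂ i, Λ i := Set.mem_iInter.2 h0
  -- Step 1: v is in the polar of the intersection
  have hpolar : ∀ x ∈ ⋂ i, Λ i, (inner ℝ v x : ℝ) ≤ 0 := by
    intro x hx
    by_contra hpos
    push_neg at hpos
    have hη : 0 < (inner ℝ v x : ℝ) / (2 * (‖x‖ + 1)) := by positivity
    obtain ⟨δ, hδ, hd⟩ := hv _ hη
    set t : ℝ := δ / (2 * (‖x‖ + 1)) with ht_def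
    have ht : 0 < t := by positivity
    have htx : t • x ∈ ⋂ i, Λ i :=
      Set.mem_iInter.2 fun i => hcone i t ht.le x (Set.mem_iInter.1 hx i)
    have hnx : ‖t • x‖ = t * ‖x‖ := by
      rw [norm_smul, Real.norm_eq_abs, abs_of_pos ht]
    have hnorm : ‖t • x - 0‖ < δ := by
      rw [sub_zero, hnx, ht_def]
      rw [div_mul_eq_mul_div, div_lt_iff₀ (by positivity)]
      nlinarith [norm_nonneg x]
    have hkey := hd _ htx hnorm
    rw [sub_zero, real_inner_smul_right, hnx, zero_add] at hkey
    have hxn : 0 ≤ ‖x‖ := norm_nonneg x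
    have hB : (0:ℝ) < 2*(‖x‖+1) := by positivity
    have h6 : (inner ℝ v x : ℝ)/(2*(‖x‖+1)) * ‖x‖ < inner ℝ v x := by
      rw [div_mul_eq_mul_div, div_lt_iff₀ hB]
      nlinarith
    have h7 := mul_lt_mul_of_pos_left h6 ht
    nlinarith [hkey, h7]
  rw [Metric.mem_closure_iff]
  intro ε hε
  obtain ⟨k, δ, hδ, hA⟩ := aux_compact_approx Λ hclosed h0
    (show (0:ℝ) < ε^2/(8*(‖v‖+1)) by positivity) (2*‖v‖)
  set σ : ℝ := δ^2/(4*‖v‖^2+1) with hσdef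
  have hσ : 0 < σ := by positivity
  clear_value σ
  set φ : EuclideanSpace ℝ (Fin n) → ℝ := fun x =>
    (2*σ)⁻¹ * (∑ i ∈ Finset.range k, (infDist x (Λ i))^2) + ((1:ℝ)/2*‖x‖^2 - inner ℝ v x) with hφdef
  have hφc' : True := trivial
  have hφc : Continuous φ := by
    apply Continuous.add
    · exact continuous_const.mul
        (continuous_finset_sum _ fun i _ => (continuous_infDist_pt (Λ i)).pow 2)
    · exact (continuous_const.mul (continuous_norm.pow 2)).sub
        ((continuous_const : Continuous fun _ : EuclideanSpace ℝ (Fin n) => v).inner continuous_id)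
  set M : ℝ := 2*‖v‖+1 with hM
  have hMball : (0 : EuclideanSpace ℝ (Fin n)) ∈ closedBall 0 M := by
    simp only [mem_closedBall, dist_self]
    positivity
  obtain ⟨z, hzball, hzmin'⟩ :=
    (isCompact_closedBall (0 : EuclideanSpace ℝ (Fin n)) M).exists_isMinOn ⟨0, hMball⟩
      hφc.continuousOn
  have hzmin : ∀ y ∈ closedBall (0 : EuclideanSpace ℝ (Fin n)) M, φ z ≤ φ y :=
    isMinOn_iff.1 hzmin'
  have hφ0 : φ 0 = 0 := by
    simp [hφdef, infDist_zero_of_mem (h0 _)]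
  have hz0 : φ z ≤ 0 := hφ0 ▸ hzmin 0 hMball
  have hglobal : ∀ y, φ z ≤ φ y := by
    intro y
    by_cases hy : y ∈ closedBall (0 : EuclideanSpace ℝ (Fin n)) M
    · exact hzmin y hy
    · have h1 : M < ‖y‖ := by
        simpa [mem_closedBall, dist_zero_right, not_le] using hy
      have hiv : (inner ℝ v y : ℝ) ≤ ‖v‖*‖y‖ := real_inner_le_norm v y
      have hsum : 0 ≤ (2*σ)⁻¹ * (∑ i ∈ Finset.range k, (infDist y (Λ i))^2) :=
        mul_nonneg (inv_nonneg.2 (by linarith)) (Finset.sum_nonneg fun i _ => sq_nonneg _)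
      have hpos : 0 < φ y := by
        simp only [hφdef]
        nlinarith [norm_nonneg v, norm_nonneg y]
      linarith
  -- projections
  choose p hpΛ hpd using fun i => (hclosed i).exists_infDist_eq_dist ⟨0, h0 i⟩ z
  set S1 : EuclideanSpace ℝ (Fin n) := ∑ i ∈ Finset.range k, p i with hS1
  set c : ℝ := 1 + (k:ℝ)/σ with hc
  have hcpos : 0 < c := by
    rw [hc]
    have h' : 0 ≤ (k:ℝ)/σ := div_nonneg (Nat.cast_nonneg k) hσ.le
    linarith
  clear_value c
  set r : EuclideanSpace ℝ (Fin n) := v + σ⁻¹ • S1 - c • z with hr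
  set G : EuclideanSpace ℝ (Fin n) → ℝ := fun y =>
    (2*σ)⁻¹ * (∑ i ∈ Finset.range k, ‖y - p i‖^2) + ((1:ℝ)/2*‖y‖^2 - inner ℝ v y) with hG
  have hGz : G z = φ z := by
    simp only [hG, hφdef]
    congr 2
    apply Finset.sum_congr rfl
    intro i _
    rw [hpd i, dist_eq_norm]
  have hφG : ∀ y, φ y ≤ G y := by
    intro y
    simp only [hG, hφdef]
    have hss : ∑ i ∈ Finset.range k, (infDist y (Λ i))^2 ≤ ∑ i ∈ Finset.range k, ‖y - p i‖^2 := by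
      apply Finset.sum_le_sum
      intro i _
      have h1 : infDist y (Λ i) ≤ ‖y - p i‖ := by
        rw [← dist_eq_norm]
        exact infDist_le_dist_of_mem (hpΛ i)
      exact pow_le_pow_left₀ infDist_nonneg h1 2
    have h2σn : 0 ≤ (2*σ)⁻¹ := inv_nonneg.2 (by linarith)
    have := mul_le_mul_of_nonneg_left hss h2σn
    linarith
  have hGmin : ∀ y, G z ≤ G y := fun y => hGz ▸ ((hglobal y).trans (hφG y))
  -- Taylor expansion identity
  have key : ∀ h : EuclideanSpace ℝ (Fin n),
      G (z + h) = G z + c/2 * ‖h‖^2 - inner ℝ r h := by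
    intro h
    simp only [hG]
    have e1 : ∀ i ∈ Finset.range k,
        ‖z + h - p i‖^2 = ‖z - p i‖^2 + 2*(inner ℝ (z - p i) h : ℝ) + ‖h‖^2 := by
      intro i _
      rw [show z + h - p i = (z - p i) + h by abel, norm_add_sq_real]
    rw [Finset.sum_congr rfl e1]
    have e2 : ∑ i ∈ Finset.range k, (‖z - p i‖^2 + 2*(inner ℝ (z - p i) h : ℝ) + ‖h‖^2)
        = (∑ i ∈ Finset.range k, ‖z - p i‖^2)
          + 2*((k:ℝ)*(inner ℝ z h : ℝ) - (inner ℝ S1 h : ℝ)) + (k:ℝ)*‖h‖^2 := by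
      rw [Finset.sum_add_distrib, Finset.sum_add_distrib]
      congr 1
      · congr 1
        rw [← Finset.mul_sum]
        congr 1
        have : ∑ i ∈ Finset.range k, (inner ℝ (z - p i) h : ℝ)
            = (inner ℝ (∑ i ∈ Finset.range k, (z - p i)) h : ℝ) := (sum_inner _ _ _).symm
        rw [this, Finset.sum_sub_distrib, Finset.sum_const, Finset.card_range, inner_sub_left,
          ← Nat.cast_smul_eq_nsmul ℝ, real_inner_smul_left]
      · simp [Finset.sum_const, Finset.card_range]
    rw [e2]
    have e3 : ‖z + h‖^2 = ‖z‖^2 + 2*(inner ℝ z h : ℝ) + ‖h‖^2 := norm_add_sq_real z h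
    have e4 : (inner ℝ v (z + h) : ℝ) = inner ℝ v z + inner ℝ v h := inner_add_right v z h
    have e5 : (inner ℝ r h : ℝ) = inner ℝ v h + σ⁻¹ * (inner ℝ S1 h : ℝ) - c * (inner ℝ z h : ℝ) := by
      rw [hr, inner_sub_left, inner_add_left, real_inner_smul_left, real_inner_smul_left]
    rw [e3, e4, e5, hc]
    ring
  -- stationarity: r = 0
  have hrzero : r = 0 := by
    have hm := hGmin (z + c⁻¹ • r)
    rw [key] at hm
    have h1 : ‖c⁻¹ • r‖^2 = c⁻¹^2 * ‖r‖^2 := by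
      rw [norm_smul, Real.norm_eq_abs, abs_of_pos (inv_pos.2 hcpos), mul_pow]
    have h2 : (inner ℝ r (c⁻¹ • r) : ℝ) = c⁻¹ * ‖r‖^2 := by
      rw [real_inner_smul_right, real_inner_self_eq_norm_sq]
    rw [h1, h2] at hm
    have hcc : c * c⁻¹ = 1 := mul_inv_cancel₀ hcpos.ne'
    have hstep : c/2 * (c⁻¹^2 * ‖r‖^2) - c⁻¹*‖r‖^2
        = (c*c⁻¹) * (c⁻¹ * ‖r‖^2)/2 - c⁻¹*‖r‖^2 := by ring
    rw [hcc, one_mul] at hstep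
    have h9 : c⁻¹ * ‖r‖^2 ≤ 0 := by linarith
    have h10 : 0 ≤ c⁻¹ * ‖r‖^2 := mul_nonneg (inv_pos.2 hcpos).le (sq_nonneg _)
    have h11 : c⁻¹ * ‖r‖^2 = 0 := le_antisymm h9 h10
    have h12 : ‖r‖^2 = 0 := by
      rcases mul_eq_zero.1 h11 with h | h
      · exact absurd h (inv_pos.2 hcpos).ne'
      · exact h
    have h13 : ‖r‖ = 0 := by
      exact (pow_eq_zero_iff (two_ne_zero)).1 h12
    exact norm_eq_zero.1 h13
  have hvideq : v = c • z - σ⁻¹ • S1 := by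
    have h1 : v + σ⁻¹ • S1 - c • z = 0 := hrzero
    have h2 : v + σ⁻¹ • S1 = c • z := by
      rwa [sub_eq_zero] at h1
    rw [← h2]
    abel
  -- quantitative bounds
  have hGz0 : G z ≤ 0 := hGz ▸ hz0
  simp only [hG] at hGz0
  have hsumz : 0 ≤ ∑ i ∈ Finset.range k, ‖z - p i‖^2 :=
    Finset.sum_nonneg fun i _ => sq_nonneg _
  have hivz : (inner ℝ v z : ℝ) ≤ ‖v‖ * ‖z‖ := real_inner_le_norm v z
  have h2σ : 0 < (2*σ)⁻¹ := inv_pos.2 (by linarith)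
  have hzle : ‖z‖ ≤ 2*‖v‖ := by
    nlinarith [norm_nonneg z, norm_nonneg v, mul_nonneg h2σ.le hsumz]
  have hsumb : ∑ i ∈ Finset.range k, ‖z - p i‖^2 ≤ 4*σ*‖v‖^2 := by
    have hstep : (2*σ)⁻¹ * (∑ i ∈ Finset.range k, ‖z - p i‖^2) ≤ 2*‖v‖^2 := by
      nlinarith [norm_nonneg z, norm_nonneg v, sq_nonneg ‖z‖]
    have h2σ' : (2*σ) * (2*σ)⁻¹ = 1 := mul_inv_cancel₀ (by positivity)
    nlinarith
  have hdi : ∀ i < k, infDist z (Λ i) ≤ δ := by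
    intro i hik
    have h1 : ‖z - p i‖^2 ≤ ∑ j ∈ Finset.range k, ‖z - p j‖^2 :=
      Finset.single_le_sum (f := fun j => ‖z - p j‖^2) (fun j _ => sq_nonneg _)
        (Finset.mem_range.2 hik)
    have h2 : 4*σ*‖v‖^2 ≤ δ^2 := by
      have hD : (4*‖v‖^2+1) * σ = δ^2 := by
        rw [hσdef]
        field_simp
      nlinarith [hσ.le, sq_nonneg ‖v‖]
    rw [hpd i, dist_eq_norm]
    nlinarith [norm_nonneg (z - p i)]
  have hinf : infDist z (⋂ i, Λ i) ≤ ε^2/(8*(‖v‖+1)) := hA z hzle hdi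
  obtain ⟨q, hqΛ, hqd⟩ := hΛc.exists_infDist_eq_dist ⟨0, hΛ0⟩ z
  have hzq : ‖z - q‖ ≤ ε^2/(8*(‖v‖+1)) := by
    rw [← dist_eq_norm, ← hqd]; exact hinf
  have hivz2 : (inner ℝ v z : ℝ) ≤ ε^2/8 := by
    have h1 : (inner ℝ v z : ℝ) = inner ℝ v (z - q) + inner ℝ v q := by
      rw [← inner_add_right, sub_add_cancel]
    have h2 : (inner ℝ v (z - q) : ℝ) ≤ ‖v‖*‖z - q‖ := real_inner_le_norm _ _
    have h3 : (inner ℝ v q : ℝ) ≤ 0 := hpolar q hqΛ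
    have h4 : ‖v‖*‖z - q‖ ≤ ‖v‖ * (ε^2/(8*(‖v‖+1))) :=
      mul_le_mul_of_nonneg_left hzq (norm_nonneg v)
    have hA8 : (‖v‖+1) * (ε^2/(8*(‖v‖+1))) = ε^2/8 := by
      field_simp
    have hAnn : 0 ≤ ε^2/(8*(‖v‖+1)) := by positivity
    have h5 : ‖v‖ * (ε^2/(8*(‖v‖+1))) ≤ ε^2/8 := by
      nlinarith [hA8, hAnn]
    linarith
  have hzfin : ‖z‖ ≤ ε/2 := by
    have h1 : 1/2*‖z‖^2 ≤ ε^2/8 := by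
      have := mul_nonneg h2σ.le hsumz
      linarith
    nlinarith [norm_nonneg z, hε.le, h1]
  -- the witness
  set xf : ℕ → EuclideanSpace ℝ (Fin n) := fun i => if i < k then σ⁻¹ • (z - p i) else 0 with hxf
  have hxfmem : ∀ i, xf i ∈ limitingNormalCone (Λ i) 0 := by
    intro i
    by_cases hik : i < k
    · simp only [hxf, if_pos hik]
      apply aux_frechet_mem_limiting (hcone i) (hpΛ i)
      apply aux_proj_normal hσ
      intro x hx
      rw [← dist_eq_norm, ← dist_eq_norm, ← hpd i]
      exact infDist_le_dist_of_mem hx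
    · simp only [hxf, if_neg hik]
      exact aux_zero_mem_limiting (h0 i)
  refine ⟨∑ i ∈ Finset.range k, xf i, ⟨Finset.range k, xf, hxfmem, rfl⟩, ?_⟩
  have hsumxf : ∑ i ∈ Finset.range k, xf i = ((k:ℝ)/σ) • z - σ⁻¹ • S1 := by
    have hcongr : ∀ i ∈ Finset.range k, xf i = σ⁻¹ • z - σ⁻¹ • p i := by
      intro i hi
      simp only [hxf, if_pos (Finset.mem_range.1 hi), smul_sub]
    rw [Finset.sum_congr rfl hcongr, Finset.sum_sub_distrib, Finset.sum_const,
      Finset.card_range, ← Finset.smul_sum, ← hS1, ← Nat.cast_smul_eq_nsmul ℝ,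
      smul_smul, ← div_eq_mul_inv]
  have hdv : v - ∑ i ∈ Finset.range k, xf i = z := by
    rw [hsumxf, hvideq, hc]
    module
  rw [dist_eq_norm, hdv]
  linarith
end

section
/- Let {Λ_i}_{i∈ℕ} be closed cones in ℝⁿ satisfying the normal qualification condition and each normally regular at the origin (N(0;Λ_i) = N̂(0;Λ_i)). Then for Λ := ⋂_{i=1}^∞ Λ_i the Fréchet normal cone is computed exactly as N̂(0;Λ) = cl { Σ_{i∈I} x*_i : x*_i ∈ N(0;Λ_i), I a finite subset of ℕ }. -/
open Filter Topology

variable {E : Type*} [NormedAddCommGroup E] [InnerProductSpace ℝ E]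

/-- The polar cone of a set. -/
def polarCone (Λ : Set E) : Set E := {v | ∀ x ∈ Λ, (inner ℝ v x : ℝ) ≤ 0}

/-- For a cone the Fréchet normal cone at the origin is the polar cone. -/
lemma frechet_eq_polar (Λ : Set E) (hcone : IsConeSet Λ) :
    frechetNormalCone Λ 0 = polarCone Λ := by
  ext v
  constructor
  · intro hv x hx
    by_contra h
    push_neg at h
    have hx0 : x ≠ 0 := by
      rintro rfl; simp at h
    have hnx : (0:ℝ) < ‖x‖ := norm_pos_iff.mpr hx0
    obtain ⟨δ, hδ, H⟩ := hv ((inner ℝ v x : ℝ) / (2 * ‖x‖)) (by positivity)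
    set t : ℝ := min (δ / (2 * ‖x‖)) 1 with ht
    have ht0 : 0 < t := by positivity
    have hmem : t • x ∈ Λ := hcone t ht0.le x hx
    have hlt : ‖t • x - 0‖ < δ := by
      rw [sub_zero, norm_smul, Real.norm_eq_abs, abs_of_pos ht0]
      have : t ≤ δ / (2 * ‖x‖) := min_le_left _ _
      calc t * ‖x‖ ≤ (δ / (2 * ‖x‖)) * ‖x‖ := by nlinarith
        _ = δ / 2 := by field_simp
        _ < δ := by linarith
    have := H (t • x) hmem hlt
    rw [sub_zero, inner_smul_right, norm_smul, Real.norm_eq_abs, abs_of_pos ht0,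
      zero_add] at this
    have h2 : (inner ℝ v x : ℝ) / (2 * ‖x‖) * (t * ‖x‖) = t * ((inner ℝ v x : ℝ) / 2) := by
      field_simp
    rw [h2] at this
    nlinarith
  · intro hv η hη
    refine ⟨1, one_pos, fun x hx _ => ?_⟩
    have := hv x hx
    rw [sub_zero]
    have : (inner ℝ v x : ℝ) ≤ 0 := this
    have hn : (0:ℝ) ≤ ‖x‖ := norm_nonneg _
    nlinarith

/-- A Fréchet normal at a scaled point of a cone. -/
lemma isEpsNormal_smul {Λ : Set E} (hcone : IsConeSet Λ) {u p : E} {c : ℝ} (hc : 0 < c)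
    (h : IsEpsNormal 0 u Λ p) : IsEpsNormal 0 u Λ (c • p) := by
  intro η hη
  obtain ⟨δ, hδ, H⟩ := h η hη
  refine ⟨c * δ, by positivity, fun x hx hxd => ?_⟩
  have hx' : c⁻¹ • x ∈ Λ := hcone c⁻¹ (by positivity) x hx
  have key : c⁻¹ • x - p = c⁻¹ • (x - c • p) := by
    rw [smul_sub, smul_smul, inv_mul_cancel₀ hc.ne', one_smul]
  have hnorm : ‖c⁻¹ • x - p‖ = c⁻¹ * ‖x - c • p‖ := by
    rw [key, norm_smul, Real.norm_eq_abs, abs_of_pos (by positivity)]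
  have hlt : ‖c⁻¹ • x - p‖ < δ := by
    rw [hnorm]
    calc c⁻¹ * ‖x - c • p‖ < c⁻¹ * (c * δ) := by
          apply mul_lt_mul_of_pos_left hxd (by positivity)
      _ = δ := by field_simp
  have := H (c⁻¹ • x) hx' hlt
  rw [key, inner_smul_right, norm_smul, Real.norm_eq_abs,
    abs_of_pos (show (0:ℝ) < c⁻¹ by positivity), zero_add] at this
  rw [zero_add]
  calc (inner ℝ u (x - c • p) : ℝ) = c * (c⁻¹ * inner ℝ u (x - c • p)) := by
        field_simp
    _ ≤ c * (η * (c⁻¹ * ‖x - c • p‖)) := mul_le_mul_of_nonneg_left this hc.le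
    _ = η * ‖x - c • p‖ := by
        field_simp

/-- For a cone, any Fréchet normal at a point of the cone belongs to the
limiting normal cone at the origin. -/
lemma frechet_mem_limiting {Λ : Set E} (hcone : IsConeSet Λ) {u p : E} (hp : p ∈ Λ)
    (h : IsEpsNormal 0 u Λ p) : u ∈ limitingNormalCone Λ 0 := by
  refine ⟨fun _ => 0, fun k => (1 / ((k:ℝ) + 1)) • p, fun _ => u,
    fun _ => le_refl _, tendsto_const_nhds, fun k => hcone _ (by positivity) p hp, ?_,
    tendsto_const_nhds, fun k => isEpsNormal_smul hcone (by positivity) h⟩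
  have := (tendsto_one_div_add_atTop_nhds_zero_nat (𝕜 := ℝ)).smul_const p
  simpa using this

/-- A closed cone that is normally regular at the origin satisfies the bipolar
property: any point whose inner products with all polar vectors are nonpositive
belongs to the cone. -/
lemma regular_cone_bipolar [ProperSpace E] {Λ : Set E} (hcone : IsConeSet Λ)
    (hclosed : IsClosed Λ) (h0 : (0:E) ∈ Λ)
    (hreg : limitingNormalCone Λ 0 = frechetNormalCone Λ 0)
    {w : E} (hw : ∀ u ∈ polarCone Λ, (inner ℝ u w : ℝ) ≤ 0) : w ∈ Λ := by
  obtain ⟨p, hp, hpd⟩ := hclosed.exists_infDist_eq_dist ⟨0, h0⟩ w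
  have hmin : ∀ x ∈ Λ, dist w p ≤ dist w x := by
    intro x hx
    rw [← hpd]
    exact Metric.infDist_le_dist_of_mem hx
  set u := w - p with hu
  -- proximal inequality
  have prox : ∀ x ∈ Λ, (inner ℝ u (x - p) : ℝ) ≤ (1/2) * ‖x - p‖ ^ 2 := by
    intro x hx
    have h1 : ‖w - p‖ ≤ ‖w - x‖ := by
      simpa [dist_eq_norm] using hmin x hx
    have h2 : ‖w - x‖ ^ 2 = ‖u - (x - p)‖ ^ 2 := by
      congr 1
      rw [hu]; abel_nf
    have h3 : ‖u - (x - p)‖ ^ 2 = ‖u‖ ^ 2 - 2 * inner ℝ u (x - p) + ‖x - p‖ ^ 2 := by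
      rw [← real_inner_self_eq_norm_sq, ← real_inner_self_eq_norm_sq,
        ← real_inner_self_eq_norm_sq]
      rw [inner_sub_sub_self, real_inner_comm (x - p) u]
      ring
    nlinarith [h1, h2, h3, norm_nonneg (w - p), norm_nonneg (w - x),
      sq_nonneg (‖w - x‖ - ‖w - p‖)]
  -- u is a Fréchet normal at p
  have hfp : IsEpsNormal 0 u Λ p := by
    intro η hη
    refine ⟨2 * η, by positivity, fun x hx hxd => ?_⟩
    have := prox x hx
    rw [zero_add]
    nlinarith [norm_nonneg (x - p)]
  -- hence u is in the polar cone
  have hupol : u ∈ polarCone Λ := by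
    rw [← frechet_eq_polar Λ hcone, ← hreg]
    exact frechet_mem_limiting hcone hp hfp
  -- inner ℝ u p ≥ 0
  have hup : (0:ℝ) ≤ inner ℝ u p := by
    by_contra hneg
    push_neg at hneg
    have hpne : p ≠ 0 := by
      rintro rfl; simp at hneg
    have hB : (0:ℝ) < ‖p‖ ^ 2 := pow_pos (norm_pos_iff.mpr hpne) 2
    set s : ℝ := min 1 (-(inner ℝ u p : ℝ) / ‖p‖ ^ 2) with hs
    have hs0 : 0 < s := lt_min one_pos (div_pos (by linarith) hB)
    have hs1 : s ≤ 1 := min_le_left _ _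
    have hsB : s ≤ -(inner ℝ u p : ℝ) / ‖p‖ ^ 2 := min_le_right _ _
    have hmem : (1 - s) • p ∈ Λ := hcone _ (by linarith) p hp
    have := prox ((1 - s) • p) hmem
    have e1 : (1 - s) • p - p = (-s) • p := by
      rw [sub_smul, one_smul, neg_smul]; abel
    rw [e1, inner_smul_right, norm_smul, Real.norm_eq_abs, abs_neg,
      abs_of_pos hs0, mul_pow] at this
    have hs2 : s * ‖p‖ ^ 2 ≤ -(inner ℝ u p : ℝ) := (le_div_iff₀ hB).mp hsB
    nlinarith [this, hs0, hs2, hneg]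
  have huw : (inner ℝ u w : ℝ) ≤ 0 := hw u hupol
  have : ‖u‖ ^ 2 ≤ 0 := by
    have : (inner ℝ u u : ℝ) = inner ℝ u w - inner ℝ u p := by
      rw [hu, inner_sub_right]
    nlinarith [real_inner_self_eq_norm_sq u, this, huw, hup]
  have : u = 0 := by
    have := norm_eq_zero.mp (by nlinarith [norm_nonneg u, sq_nonneg ‖u‖] : ‖u‖ = 0)
    exact this
  have hwp : w = p := by
    rw [hu] at this
    exact sub_eq_zero.mp this
  rwa [hwp]

/-- exact computation of the Fréchet normal cone to a countable
intersection of normally regular cones. -/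
theorem frechet_normal_cone_of_regular_cones (n : ℕ)
    (Λ : ℕ → Set (EuclideanSpace ℝ (Fin n)))
    (hcone : ∀ i, IsConeSet (Λ i)) (hclosed : ∀ i, IsClosed (Λ i))
    (h0 : ∀ i, (0 : EuclideanSpace ℝ (Fin n)) ∈ Λ i)
    (hqc : NormalQualification n Λ)
    (hreg : ∀ i, limitingNormalCone (Λ i) 0 = frechetNormalCone (Λ i) 0) :
    frechetNormalCone (⋂ i, Λ i) 0 =
      closure {v | ∃ (I : Finset ℕ) (x : ℕ → EuclideanSpace ℝ (Fin n)),
        (∀ i, x i ∈ limitingNormalCone (Λ i) 0) ∧ v = ∑ i ∈ I, x i} := by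
  classical
  have hpolar : ∀ i, limitingNormalCone (Λ i) 0 = polarCone (Λ i) :=
    fun i => (hreg i).trans (frechet_eq_polar _ (hcone i))
  have hiCone : IsConeSet (⋂ i, Λ i) := by
    intro t ht v hv
    exact Set.mem_iInter.mpr fun i => hcone i t ht v (Set.mem_iInter.mp hv i)
  rw [frechet_eq_polar _ hiCone]
  set S : Set (EuclideanSpace ℝ (Fin n)) :=
    {v | ∃ (I : Finset ℕ) (x : ℕ → EuclideanSpace ℝ (Fin n)),
      (∀ i, x i ∈ limitingNormalCone (Λ i) 0) ∧ v = ∑ i ∈ I, x i} with hSdef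
  apply Set.Subset.antisymm
  · -- hard direction: polar of intersection ⊆ closure S
    intro v hv
    by_contra hvK
    have hSconv : Convex ℝ S := by
      rintro a ⟨I, x, hx, rfl⟩ b ⟨J, y, hy, rfl⟩ ta tb hta htb htab
      refine ⟨I ∪ J, fun i =>
        ta • (if i ∈ I then x i else 0) + tb • (if i ∈ J then y i else 0),
        fun i => ?_, ?_⟩
      · rw [hpolar i]
        intro z hz
        rw [inner_add_left, real_inner_smul_left, real_inner_smul_left]
        have hxz : (inner ℝ (if i ∈ I then x i else 0) z : ℝ) ≤ 0 := by
          by_cases h : i ∈ I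
          · rw [if_pos h]; exact (hpolar i ▸ hx i) z hz
          · rw [if_neg h, inner_zero_left]
        have hyz : (inner ℝ (if i ∈ J then y i else 0) z : ℝ) ≤ 0 := by
          by_cases h : i ∈ J
          · rw [if_pos h]; exact (hpolar i ▸ hy i) z hz
          · rw [if_neg h, inner_zero_left]
        exact add_nonpos (mul_nonpos_of_nonneg_of_nonpos hta hxz)
          (mul_nonpos_of_nonneg_of_nonpos htb hyz)
      · rw [Finset.sum_add_distrib, ← Finset.smul_sum, ← Finset.smul_sum,
          Finset.sum_ite_mem, Finset.sum_ite_mem, Finset.union_inter_cancel_left,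
          Finset.union_inter_cancel_right]
    obtain ⟨f, u, hfS, hfv⟩ :=
      geometric_hahn_banach_closed_point hSconv.closure isClosed_closure hvK
    set w := (InnerProductSpace.toDual ℝ (EuclideanSpace ℝ (Fin n))).symm f with hwdef
    have hfw : ∀ z, (inner ℝ w z : ℝ) = f z := fun z =>
      InnerProductSpace.toDual_symm_apply
    have h0S : (0 : EuclideanSpace ℝ (Fin n)) ∈ S := by
      refine ⟨∅, fun _ => 0, fun i => ?_, by simp⟩
      rw [hpolar i]
      intro z hz
      rw [inner_zero_left]
    have hu0 : 0 < u := by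
      have := hfS 0 (subset_closure h0S)
      simpa using this
    have hwpol : ∀ i, ∀ z ∈ polarCone (Λ i), (inner ℝ z w : ℝ) ≤ 0 := by
      intro i z hz
      have hmem : ∀ t : ℝ, 0 < t → t • z ∈ S := by
        intro t ht
        refine ⟨{i}, fun j => if j = i then t • z else 0, fun j => ?_, by simp⟩
        rw [hpolar j]
        intro y hy
        show (inner ℝ (if j = i then t • z else 0) y : ℝ) ≤ 0
        by_cases hji : j = i
        · rw [if_pos hji, real_inner_smul_left]
          subst hji
          exact mul_nonpos_of_nonneg_of_nonpos ht.le (hz y hy)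
        · rw [if_neg hji, inner_zero_left]
      have hfz : f z ≤ 0 := by
        by_contra hpos
        push_neg at hpos
        have := hfS ((u / f z) • z) (subset_closure (hmem _ (div_pos hu0 hpos)))
        rw [map_smul, smul_eq_mul, div_mul_cancel₀ _ hpos.ne'] at this
        exact lt_irrefl u this
      rw [real_inner_comm, hfw]
      exact hfz
    have hwΛ : ∀ i, w ∈ Λ i := fun i =>
      regular_cone_bipolar (hcone i) (hclosed i) (h0 i) (hreg i) (hwpol i)
    have hvw : (inner ℝ v w : ℝ) ≤ 0 := hv w (Set.mem_iInter.mpr hwΛ)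
    have hfvw : f v = (inner ℝ v w : ℝ) := by rw [← hfw v, real_inner_comm]
    linarith [hfv, hu0]
  · -- easy direction: closure S ⊆ polar of intersection
    apply closure_minimal
    · rintro v ⟨I, x, hx, rfl⟩ y hy
      rw [sum_inner]
      apply Finset.sum_nonpos
      intro i _
      exact (hpolar i ▸ hx i) y (Set.mem_iInter.mp hy i)
    · have hrw : polarCone (⋂ i, Λ i) =
          ⋂ x ∈ (⋂ i, Λ i), {v : EuclideanSpace ℝ (Fin n) | (inner ℝ v x : ℝ) ≤ 0} := by
        ext v
        simp [polarCone, Set.mem_iInter]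
      rw [hrw]
      exact isClosed_biInter fun x hx =>
        isClosed_le (Continuous.inner continuous_id continuous_const) continuous_const
end

section
/- Let Ω ⊆ ℝⁿ be closed around x̄ ∈ Ω, and let Λ := T(x̄;Ω) be the contingent cone to Ω at x̄. Then N(0;Λ) ⊆ N(x̄;Ω), i.e., the contingent cone is tangentially normally enclosed into Ω at x̄. -/
open Filter Topology

variable {E : Type*} [NormedAddCommGroup E] [InnerProductSpace ℝ E]

/-- The Bouligand–Severi contingent cone `T(x₀;Ω)`. -/
def contingentCone {E : Type*} [NormedAddCommGroup E] [NormedSpace ℝ E]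
    (x₀ : E) (Ω : Set E) : Set E :=
  {v | ∃ (t : ℕ → ℝ) (w : ℕ → E), (∀ k, 0 < t k) ∧ Tendsto t atTop (𝓝 0) ∧
    Tendsto w atTop (𝓝 v) ∧ ∀ k, x₀ + t k • w k ∈ Ω}

section Aux

open Metric

variable {n : ℕ}

/-- A proximal normal (residual of a metric projection) is a Fréchet normal. -/
lemma proximal_isEpsNormal {Ω : Set (EuclideanSpace ℝ (Fin n))}
    {z : EuclideanSpace ℝ (Fin n)} {c : ℝ} (hc : 0 < c)
    {w : EuclideanSpace ℝ (Fin n)}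
    (hmin : ∀ x ∈ Ω, dist (z + c • w) z ≤ dist (z + c • w) x) :
    IsEpsNormal 0 w Ω z := by
  intro η hη
  refine ⟨2 * c * η, by positivity, fun x hx hxd => ?_⟩
  have h1 := hmin x hx
  rw [dist_eq_norm, dist_eq_norm] at h1
  have e1 : z + c • w - z = c • w := by abel
  have e2 : z + c • w - x = c • w - (x - z) := by abel
  rw [e1, e2] at h1
  have h2 : ‖c • w‖ ^ 2 ≤ ‖c • w - (x - z)‖ ^ 2 :=
    pow_le_pow_left₀ (norm_nonneg _) h1 2
  rw [norm_sub_sq_real, real_inner_smul_left] at h2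
  have hn : (0:ℝ) ≤ ‖x - z‖ := norm_nonneg _
  nlinarith [hxd, hc, hη, hn]

/-- Key step: an `ε`-normal to the contingent cone at any of its points is
approximated (within `2ε + γ`) by Fréchet normals to `Ω` at points near `x₀`. -/
lemma key_step_s14 {Ω : Set (EuclideanSpace ℝ (Fin n))} (hΩ : IsClosed Ω)
    {x₀ : EuclideanSpace ℝ (Fin n)} (hx₀ : x₀ ∈ Ω)
    {u w : EuclideanSpace ℝ (Fin n)} {ε : ℝ} (hε : 0 ≤ ε)
    (hu : u ∈ contingentCone x₀ Ω)
    (hw : IsEpsNormal ε w (contingentCone x₀ Ω) u)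
    {γ : ℝ} (hγ : 0 < γ) :
    ∃ z ∈ Ω, ∃ w', ‖z - x₀‖ < γ ∧ ‖w' - w‖ < 2 * ε + γ ∧ IsEpsNormal 0 w' Ω z := by
  obtain ⟨t, us, htpos, ht0, husu, hmem⟩ := hu
  set η : ℝ := γ / 4 with hηdef
  have hη0 : 0 < η := by positivity
  obtain ⟨δ, hδ0, hineq⟩ := hw η hη0
  set s : ℝ := δ / (2 * ‖w‖ + 2) with hsdef
  have hs0 : 0 < s := by positivity
  have hsw : 2 * s * ‖w‖ < δ := by
    have hpos : (0:ℝ) < 2 * ‖w‖ + 2 := by positivity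
    have he : 2 * s * ‖w‖ = (2 * δ * ‖w‖) / (2 * ‖w‖ + 2) := by
      rw [hsdef]; ring
    rw [he, div_lt_iff₀ hpos]
    nlinarith [norm_nonneg w]
  set y : ℕ → EuclideanSpace ℝ (Fin n) :=
    fun j => x₀ + t j • (us j + s • w) with hydef
  have hne : Ω.Nonempty := ⟨x₀, hx₀⟩
  have hproj : ∀ j, ∃ p ∈ Ω, infDist (y j) Ω = dist (y j) p :=
    fun j => hΩ.exists_infDist_eq_dist hne (y j)
  choose z hzΩ hzdist using hproj
  have hmin : ∀ j, ∀ x ∈ Ω, dist (y j) (z j) ≤ dist (y j) x := by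
    intro j x hx
    rw [← hzdist j]
    exact infDist_le_dist_of_mem hx
  set ζ : ℕ → EuclideanSpace ℝ (Fin n) :=
    fun j => (t j)⁻¹ • (z j - x₀) with hζdef
  have hzeq : ∀ j, z j = x₀ + t j • ζ j := by
    intro j
    simp only [hζdef]
    rw [smul_inv_smul₀ (htpos j).ne']
    abel
  -- the basic distance estimate
  have hF3 : ∀ j, ‖us j + s • w - ζ j‖ ≤ s * ‖w‖ := by
    intro j
    have hdy : dist (y j) (x₀ + t j • us j) = t j * (s * ‖w‖) := by
      rw [dist_eq_norm]
      have e : y j - (x₀ + t j • us j) = t j • (s • w) := by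
        simp only [hydef, smul_add]; abel
      rw [e, norm_smul, norm_smul, Real.norm_eq_abs, Real.norm_eq_abs,
        abs_of_pos (htpos j), abs_of_pos hs0]
    have h1 : dist (y j) (z j) ≤ t j * (s * ‖w‖) := by
      rw [← hdy]; exact hmin j _ (hmem j)
    have hyz : y j - z j = t j • (us j + s • w - ζ j) := by
      rw [hzeq j]
      simp only [hydef, smul_sub, smul_add]; abel
    rw [dist_eq_norm, hyz, norm_smul, Real.norm_eq_abs, abs_of_pos (htpos j)] at h1
    exact le_of_mul_le_mul_left h1 (htpos j)
  -- boundedness of ζ (frequently), to extract a convergent subsequence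
  set M : ℝ := ‖u + s • w‖ + 1 + s * ‖w‖ with hMdef
  have hbd : ∀ᶠ j in atTop, ζ j ∈ closedBall (0 : EuclideanSpace ℝ (Fin n)) M := by
    have htends : Tendsto (fun j => ‖us j + s • w‖) atTop (𝓝 ‖u + s • w‖) :=
      ((husu.add tendsto_const_nhds).norm)
    have hev : ∀ᶠ j in atTop, ‖us j + s • w‖ < ‖u + s • w‖ + 1 :=
      htends.eventually_lt_const (by linarith)
    filter_upwards [hev] with j hj
    rw [mem_closedBall, dist_zero_right]
    have : ‖ζ j‖ ≤ ‖us j + s • w‖ + ‖us j + s • w - ζ j‖ := by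
      have := norm_add_le (us j + s • w - ζ j) (ζ j - (us j + s • w) + ζ j)
      calc ‖ζ j‖ = ‖us j + s • w - (us j + s • w - ζ j)‖ := by
            congr 1; abel
        _ ≤ ‖us j + s • w‖ + ‖us j + s • w - ζ j‖ := norm_sub_le _ _
    have := this.trans (by linarith [hF3 j] : ‖us j + s • w‖ + ‖us j + s • w - ζ j‖ ≤ ‖u + s • w‖ + 1 + s * ‖w‖)
    exact this
  obtain ⟨ζl, -, φ, hφ, hζconv⟩ :=
    tendsto_subseq_of_frequently_bounded isBounded_closedBall hbd.frequently
  have hφt : Tendsto φ atTop atTop := hφ.tendsto_atTop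
  -- ζl belongs to the contingent cone
  have hζΛ : ζl ∈ contingentCone x₀ Ω := by
    refine ⟨t ∘ φ, ζ ∘ φ, fun j => htpos _, ht0.comp hφt, hζconv, fun j => ?_⟩
    have := hzeq (φ j)
    simp only [Function.comp_apply]
    rw [← this]
    exact hzΩ _
  -- limit of the basic estimate
  have hlim3 : ‖u + s • w - ζl‖ ≤ s * ‖w‖ := by
    have htend : Tendsto (fun j => ‖us (φ j) + s • w - ζ (φ j)‖) atTop
        (𝓝 ‖u + s • w - ζl‖) :=
      ((((husu.comp hφt).add tendsto_const_nhds).sub hζconv).norm)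
    exact le_of_tendsto htend (Eventually.of_forall fun j => hF3 (φ j))
  have hζu : ‖ζl - u‖ < δ := by
    have h1 : ‖ζl - u‖ ≤ ‖u + s • w - ζl‖ + ‖s • w‖ := by
      calc ‖ζl - u‖ = ‖s • w - (u + s • w - ζl)‖ := by congr 1; abel
        _ ≤ ‖s • w‖ + ‖u + s • w - ζl‖ := norm_sub_le _ _
        _ = ‖u + s • w - ζl‖ + ‖s • w‖ := by ring
    have h2 : ‖s • w‖ = s * ‖w‖ := by
      rw [norm_smul, Real.norm_eq_abs, abs_of_pos hs0]
    rw [h2] at h1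
    calc ‖ζl - u‖ ≤ s * ‖w‖ + s * ‖w‖ := by linarith [hlim3]
      _ = 2 * s * ‖w‖ := by ring
      _ < δ := hsw
  have hip : (inner ℝ w (ζl - u) : ℝ) ≤ (ε + η) * ‖ζl - u‖ := hineq ζl hζΛ hζu
  -- the quantitative estimate ‖ζl - u‖ ≤ 2 s (ε + η)
  have hζub : ‖ζl - u‖ ≤ 2 * s * (ε + η) := by
    have hsq : ‖u + s • w - ζl‖ ^ 2 ≤ (s * ‖w‖) ^ 2 :=
      pow_le_pow_left₀ (norm_nonneg _) hlim3 2
    have he : u + s • w - ζl = s • w - (ζl - u) := by abel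
    rw [he, norm_sub_sq_real, real_inner_smul_left, norm_smul, Real.norm_eq_abs,
      abs_of_pos hs0] at hsq
    -- hsq : (s‖w‖)² - 2 s ⟪w, ζl-u⟫ + ‖ζl-u‖² ≤ (s‖w‖)²
    have hA : (0:ℝ) ≤ ‖ζl - u‖ := norm_nonneg _
    have hc0 : (0:ℝ) ≤ 2 * s * (ε + η) := by positivity
    nlinarith [hip, hs0, hA, hc0]
  -- the approximating Fréchet normals
  set w' : ℕ → EuclideanSpace ℝ (Fin n) :=
    fun j => s⁻¹ • (us j + s • w - ζ j) with hw'def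
  have hwn : ∀ j, IsEpsNormal 0 (w' j) Ω (z j) := by
    intro j
    have hc : 0 < t j * s := mul_pos (htpos j) hs0
    have hyj : y j = z j + (t j * s) • w' j := by
      simp only [hw'def, smul_smul, mul_assoc, mul_inv_cancel₀ hs0.ne', mul_one]
      rw [hzeq j]
      simp only [hydef, smul_sub, smul_add]; abel
    exact proximal_isEpsNormal hc (fun x hx => by rw [← hyj]; exact hmin j x hx)
  have hdiff : ∀ j, w' j - w = s⁻¹ • (us j - ζ j) := by
    intro j
    simp only [hw'def]
    rw [smul_sub, smul_add, smul_smul, inv_mul_cancel₀ hs0.ne', one_smul, smul_sub]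
    abel
  have hvec : Tendsto (fun j => w' (φ j) - w) atTop (𝓝 (s⁻¹ • (u - ζl))) := by
    have base : Tendsto (fun j => s⁻¹ • (us (φ j) - ζ (φ j))) atTop
        (𝓝 (s⁻¹ • (u - ζl))) := ((husu.comp hφt).sub hζconv).const_smul s⁻¹
    exact base.congr (fun j => (hdiff (φ j)).symm)
  have hlimnorm : ‖s⁻¹ • (u - ζl)‖ < 2 * ε + γ := by
    rw [norm_smul, Real.norm_eq_abs, abs_of_pos (inv_pos.mpr hs0)]
    have h1 : ‖u - ζl‖ = ‖ζl - u‖ := by rw [norm_sub_rev]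
    rw [h1]
    have h2 : s⁻¹ * ‖ζl - u‖ ≤ s⁻¹ * (2 * s * (ε + η)) :=
      mul_le_mul_of_nonneg_left hζub (inv_pos.mpr hs0).le
    have h3 : s⁻¹ * (2 * s * (ε + η)) = 2 * (ε + η) := by
      field_simp
    rw [h3] at h2
    have : 2 * (ε + η) < 2 * ε + γ := by rw [hηdef]; linarith
    linarith
  have E1 : ∀ᶠ j in atTop, ‖w' (φ j) - w‖ < 2 * ε + γ :=
    (hvec.norm).eventually_lt_const hlimnorm
  have E2 : ∀ᶠ j in atTop, ‖z (φ j) - x₀‖ < γ := by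
    have hz : Tendsto (fun j => z (φ j) - x₀) atTop (𝓝 0) := by
      have base : Tendsto (fun j => t (φ j) • ζ (φ j)) atTop (𝓝 ((0:ℝ) • ζl)) :=
        (ht0.comp hφt).smul hζconv
      rw [zero_smul] at base
      exact base.congr (fun j => by rw [hzeq (φ j)]; abel)
    have := hz.norm
    rw [norm_zero] at this
    exact this.eventually_lt_const hγ
  obtain ⟨j, h1, h2⟩ := (E1.and E2).exists
  exact ⟨z (φ j), hzΩ _, w' (φ j), h2, h1, hwn _⟩

end Aux

/-- TNE property of the contingent cone in finite dimensions:
`N(0; T(x₀;Ω)) ⊆ N(x₀;Ω)` for any set `Ω ⊆ ℝⁿ` closed around `x₀ ∈ Ω`. -/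
theorem contingent_cone_tangentially_normally_enclosed (n : ℕ)
    (Ω : Set (EuclideanSpace ℝ (Fin n))) (hΩ : IsClosed Ω)
    (x₀ : EuclideanSpace ℝ (Fin n)) (hx₀ : x₀ ∈ Ω) :
    limitingNormalCone (contingentCone x₀ Ω) 0 ⊆ limitingNormalCone Ω x₀ := by
  intro v hv
  obtain ⟨ε, xs, ws, hε0, hεto, hxΛ, hxto, hwto, hnorm⟩ := hv
  have hk : ∀ k : ℕ, ∃ z ∈ Ω, ∃ w', ‖z - x₀‖ < 1 / (k + 1) ∧
      ‖w' - ws k‖ < 2 * ε k + 1 / (k + 1) ∧ IsEpsNormal 0 w' Ω z :=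
    fun k => key_step_s14 hΩ hx₀ (hε0 k) (hxΛ k) (hnorm k)
      (by positivity : (0:ℝ) < 1 / (k + 1))
  choose z hzΩ w' hz hw' hwn using hk
  have hone : Tendsto (fun k : ℕ => 1 / ((k : ℝ) + 1)) atTop (𝓝 0) :=
    tendsto_one_div_add_atTop_nhds_zero_nat
  refine ⟨fun _ => 0, z, w', fun _ => le_refl 0, tendsto_const_nhds, hzΩ, ?_, ?_, hwn⟩
  · rw [tendsto_iff_norm_sub_tendsto_zero]
    exact squeeze_zero (fun k => norm_nonneg _) (fun k => (hz k).le) hone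
  · rw [tendsto_iff_norm_sub_tendsto_zero]
    have hws : Tendsto (fun k => ‖ws k - v‖) atTop (𝓝 0) := by
      rw [← tendsto_iff_norm_sub_tendsto_zero]; exact hwto
    have hbound : ∀ k, ‖w' k - v‖ ≤ (2 * ε k + 1 / (k + 1)) + ‖ws k - v‖ := by
      intro k
      calc ‖w' k - v‖ = ‖(w' k - ws k) + (ws k - v)‖ := by congr 1; abel
        _ ≤ ‖w' k - ws k‖ + ‖ws k - v‖ := norm_add_le _ _
        _ ≤ (2 * ε k + 1 / (k + 1)) + ‖ws k - v‖ := by linarith [hw' k]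
    have hRHS : Tendsto (fun k : ℕ => (2 * ε k + 1 / ((k : ℝ) + 1)) + ‖ws k - v‖)
        atTop (𝓝 0) := by
      have h1 : Tendsto (fun k : ℕ => 2 * ε k + 1 / ((k : ℝ) + 1)) atTop (𝓝 (2 * 0 + 0)) :=
        (hεto.const_mul 2).add hone
      rw [mul_zero, add_zero] at h1
      have h2 := h1.add hws
      rw [add_zero] at h2
      exact h2
    exact squeeze_zero (fun k => norm_nonneg _) hbound hRHS
end
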